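/- arXiv:2101.11947 — 4 statements merged into one kernel-verified Lean document; each statement's English description precedes it below -/
import Mathlib

section
/- Let k ≥ 1 and n ≥ d ≥ 1 be integers with k ≥ 2^(n−d−1). Then f(n,k,d) = 2^d·k − ⌊k / 2^(n−d)⌋. -/
open scoped Classical

noncomputable section

abbrev F2 : Type := ZMod 2

/-- Number of members of the multiset `H` (counted with multiplicity) containing `x`. -/
def covCount (n : ℕ) (H : Multiset (AffineSubspace F2 (Fin n → F2))) (x : Fin n → F2) : ℕ :=
  Multiset.countP (fun S => x ∈ S) H

/-- `H` is a (k,d)-cover of 𝔽₂ⁿ: a multiset of (n-d)-dimensional affine subspaces covering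
every nonzero point at least `k` times and the origin at most `k-1` times. -/
def IsCover (n k d : ℕ) (H : Multiset (AffineSubspace F2 (Fin n → F2))) : Prop :=
  (∀ S ∈ H, (S : Set (Fin n → F2)).Nonempty ∧ Module.finrank F2 S.direction = n - d) ∧
  (∀ x : Fin n → F2, x ≠ 0 → k ≤ covCount n H x) ∧
  covCount n H 0 < k

/-- `H` is a (k,d;s)-cover of 𝔽₂ⁿ: a (k,d)-cover in which the origin lies in exactly `s`
members (counted with multiplicity). -/
def IsCoverExact (n k d s : ℕ) (H : Multiset (AffineSubspace F2 (Fin n → F2))) : Prop :=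
  (∀ S ∈ H, (S : Set (Fin n → F2)).Nonempty ∧ Module.finrank F2 S.direction = n - d) ∧
  (∀ x : Fin n → F2, x ≠ 0 → k ≤ covCount n H x) ∧
  covCount n H 0 = s

/-- Minimum cardinality of a (k,d)-cover of 𝔽₂ⁿ. -/
def f (n k d : ℕ) : ℕ := sInf {m | ∃ H, IsCover n k d H ∧ Multiset.card H = m}

/-- Minimum cardinality of a (k,d;s)-cover of 𝔽₂ⁿ. -/
def g (n k d s : ℕ) : ℕ := sInf {m | ∃ H, IsCoverExact n k d s H ∧ Multiset.card H = m}

end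


open Finset

-- basic F2 facts
lemma f2_cases (a : F2) : a = 0 ∨ a = 1 := by revert a; decide
lemma f2_add_self (a : F2) : a + a = 0 := by revert a; decide
lemma f2_ne_zero {a : F2} (h : a ≠ 0) : a = 1 := by revert a; decide

-- countP auxiliary lemmas
lemma countP_replicate {α : Type*} (p : α → Prop) [DecidablePred p] (a : α) (n : ℕ) :
    Multiset.countP p (Multiset.replicate n a) = if p a then n else 0 := by
  induction n with
  | zero => simp
  | succ n ih =>
    rw [Multiset.replicate_succ, Multiset.countP_cons, ih]
    split <;> simp

lemma countP_bind {α β : Type*} (p : β → Prop) [DecidablePred p] (s : Multiset α)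
    (f : α → Multiset β) :
    Multiset.countP p (s.bind f) = (s.map (fun a => Multiset.countP p (f a))).sum := by
  induction s using Multiset.induction_on with
  | empty => simp
  | cons a s ih => simp [Multiset.cons_bind, Multiset.countP_add, ih]

section Dot

variable {L : ℕ}

def dotF (w z : Fin L → F2) : F2 := ∑ j, w j * z j

lemma dotF_zero_left (z : Fin L → F2) : dotF 0 z = 0 := by simp [dotF]

lemma dotF_zero_right (w : Fin L → F2) : dotF w 0 = 0 := by simp [dotF]

lemma dotF_add_left (w w' z : Fin L → F2) : dotF (w + w') z = dotF w z + dotF w' z := by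
  simp [dotF, add_mul, Finset.sum_add_distrib]

lemma dotF_single (i : Fin L) (z : Fin L → F2) : dotF (Pi.single i 1) z = z i := by
  unfold dotF
  rw [Finset.sum_eq_single i]
  · simp
  · intro b _ hb; simp [Pi.single_apply, hb]
  · simp

lemma exists_dot_one {z : Fin L → F2} (hz : z ≠ 0) : ∃ δ, dotF δ z = 1 := by
  have : ∃ i, z i ≠ 0 := by
    by_contra h
    push_neg at h
    exact hz (funext fun i => h i)
  obtain ⟨i, hi⟩ := this
  exact ⟨Pi.single i 1, by rw [dotF_single]; exact f2_ne_zero hi⟩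

lemma exists_delta {y z : Fin L → F2} (hy : y ≠ 0) (hyz : y ≠ z) :
    ∃ δ, dotF δ y = 1 ∧ dotF δ z = 0 := by
  by_cases h : ∃ i, y i = 1 ∧ z i = 0
  · obtain ⟨i, h1, h2⟩ := h
    exact ⟨Pi.single i 1, by rw [dotF_single, h1], by rw [dotF_single, h2]⟩
  · push_neg at h
    -- every coordinate with y i = 1 has z i = 1
    have hyz' : ∃ i, y i ≠ z i := by
      by_contra hc
      push_neg at hc
      exact hyz (funext hc)
    obtain ⟨i0, hi0⟩ := hyz'
    have hyi0 : y i0 = 0 := by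
      rcases f2_cases (y i0) with h0 | h1
      · exact h0
      · rcases f2_cases (z i0) with g0 | g1
        · exact absurd g0 (h i0 h1)
        · exact absurd (h1.trans g1.symm) hi0
    have hzi0 : z i0 = 1 := by
      rcases f2_cases (z i0) with g0 | g1
      · exact absurd (hyi0.trans g0.symm) hi0
      · exact g1
    obtain ⟨j, hj⟩ : ∃ j, y j ≠ 0 := by
      by_contra hc
      push_neg at hc
      exact hy (funext fun i => hc i)
    have hyj : y j = 1 := f2_ne_zero hj
    have hzj : z j = 1 := by
      rcases f2_cases (z j) with g0 | g1
      · exact absurd g0 (h j hyj)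
      · exact g1
    have hij : i0 ≠ j := fun hE => by rw [hE, hyj] at hyi0; exact one_ne_zero hyi0
    refine ⟨Pi.single i0 1 + Pi.single j 1, ?_, ?_⟩
    · rw [dotF_add_left, dotF_single, dotF_single, hyi0, hyj, zero_add]
    · rw [dotF_add_left, dotF_single, dotF_single, hzi0, hzj]
      exact f2_add_self 1

lemma card_filter_shift (δ : Fin L → F2) (p q : (Fin L → F2) → Prop)
    [DecidablePred p] [DecidablePred q]
    (h : ∀ w, p w ↔ q (w + δ)) :
    ((univ : Finset (Fin L → F2)).filter p).card
      = ((univ : Finset (Fin L → F2)).filter q).card := by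
  have hdd : ∀ w : Fin L → F2, w + δ + δ = w := by
    intro w; funext i
    simp only [Pi.add_apply]
    rw [add_assoc, f2_add_self, add_zero]
  refine Finset.card_bij' (fun w _ => w + δ) (fun w _ => w + δ) ?_ ?_ ?_ ?_
  · intro a ha
    simp only [Finset.mem_filter, Finset.mem_univ, true_and] at ha ⊢
    exact (h a).1 ha
  · intro a ha
    simp only [Finset.mem_filter, Finset.mem_univ, true_and] at ha ⊢
    exact (h (a + δ)).2 (by rw [hdd]; exact ha)
  · intro a _; exact hdd a
  · intro a _; exact hdd a

end Dot

section DotCount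

variable {L : ℕ}

lemma card_split {α : Type*} (s : Finset α) (g : α → F2)
    [DecidablePred (fun a => g a = 0)] [DecidablePred (fun a => g a = 1)] :
    s.card = (s.filter (fun a => g a = 0)).card + (s.filter (fun a => g a = 1)).card := by
  rw [← Finset.card_union_of_disjoint]
  · congr 1
    rw [Finset.filter_union_right]
    refine (Finset.filter_true_of_mem ?_).symm
    intro a _
    exact f2_cases (g a)
  · rw [Finset.disjoint_left]
    intro a h0 h1
    rw [Finset.mem_filter] at h0 h1
    rw [h0.2] at h1
    exact absurd h1.2 (by decide)

lemma card_dot_one {z : Fin L → F2} (hz : z ≠ 0) :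
    ((univ : Finset (Fin L → F2)).filter (fun w => dotF w z = 1)).card = 2 ^ (L - 1) := by
  obtain ⟨δ, hδ⟩ := exists_dot_one hz
  have hshift : ((univ : Finset (Fin L → F2)).filter (fun w => dotF w z = 0)).card
      = ((univ : Finset (Fin L → F2)).filter (fun w => dotF w z = 1)).card := by
    apply card_filter_shift δ
    intro w
    rw [dotF_add_left, hδ]
    constructor
    · intro h; rw [h, zero_add]
    · intro h
      rcases f2_cases (dotF w z) with h0 | h1
      · exact h0
      · rw [h1] at h; exact absurd h (by decide)
  have hpart := card_split (univ : Finset (Fin L → F2)) (fun w => dotF w z)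
  have hcard : (univ : Finset (Fin L → F2)).card = 2 ^ L := by
    rw [Finset.card_univ, Fintype.card_fun]
    simp [ZMod]
  have hL : 1 ≤ L := by
    have : ∃ i, z i ≠ 0 := by
      by_contra hcon
      push_neg at hcon
      exact hz (funext fun i => hcon i)
    obtain ⟨i, _⟩ := this
    have := i.2
    omega
  have h2 : 2 ^ L = 2 ^ (L - 1) + 2 ^ (L - 1) := by
    conv_lhs => rw [show L = (L - 1) + 1 by omega]
    rw [pow_succ]; ring
  omega

lemma card_dot_pair {y z : Fin L → F2} (hy : y ≠ 0) (hz : z ≠ 0) (hyz : y ≠ z) :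
    ((univ : Finset (Fin L → F2)).filter (fun w => dotF w y = 1 ∧ dotF w z = 1)).card
      = 2 ^ (L - 2) := by
  obtain ⟨δ, hδz, hδy⟩ := exists_delta (y := z) (z := y) hz (Ne.symm hyz)
  have hshift : ((univ : Finset (Fin L → F2)).filter
        (fun w => dotF w y = 1 ∧ dotF w z = 0)).card
      = ((univ : Finset (Fin L → F2)).filter (fun w => dotF w y = 1 ∧ dotF w z = 1)).card := by
    apply card_filter_shift δ
    intro w
    rw [dotF_add_left, dotF_add_left, hδy, hδz, add_zero]
    constructor
    · rintro ⟨h1, h2⟩; exact ⟨h1, by rw [h2, zero_add]⟩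
    · rintro ⟨h1, h2⟩
      refine ⟨h1, ?_⟩
      rcases f2_cases (dotF w z) with h0 | hone
      · exact h0
      · rw [hone] at h2; exact absurd h2 (by decide)
  have hsplit := card_split ((univ : Finset (Fin L → F2)).filter (fun w => dotF w y = 1))
      (fun w => dotF w z)
  rw [Finset.filter_filter, Finset.filter_filter] at hsplit
  have hy1 := card_dot_one hy
  -- L ≥ 2
  have hL : 2 ≤ L := by
    by_contra hcon
    push_neg at hcon
    have h1 : ∃ i, y i ≠ 0 := by
      by_contra hc; push_neg at hc; exact hy (funext fun i => hc i)
    obtain ⟨i, hi⟩ := h1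
    have hiL := i.2
    have hL1 : L = 1 := by omega
    apply hyz
    funext j
    have hj0 : j = i := by
      apply Fin.ext
      omega
    subst hj0
    have hyi : y j = 1 := f2_ne_zero hi
    have hzi : z j = 1 := by
      apply f2_ne_zero
      intro hzj
      apply hz
      funext j'
      have : j' = j := by apply Fin.ext; omega
      simp [this, hzj]
    rw [hyi, hzi]
  have h2 : 2 ^ (L - 1) = 2 ^ (L - 2) + 2 ^ (L - 2) := by
    conv_lhs => rw [show L - 1 = (L - 2) + 1 by omega]
    rw [pow_succ]; ring
  omega

end DotCount

section Geo

variable {e L : ℕ}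

def gg1 (e L : ℕ) (i : Fin e) : Fin (e + L) := ⟨i.1, by omega⟩

def gg2 (e L : ℕ) (j : Fin L) : Fin (e + L) := ⟨e + j.1, by omega⟩

lemma gg2_inj (e L : ℕ) : Function.Injective (gg2 e L) := by
  intro a b hab
  have : e + a.1 = e + b.1 := congrArg Fin.val hab
  exact Fin.ext (by omega)

def dotLin (w : Fin L → F2) : (Fin L → F2) →ₗ[F2] F2 := ∑ j, w j • LinearMap.proj j

lemma dotLin_apply (w v : Fin L → F2) : dotLin w v = dotF w v := by
  simp [dotLin, dotF, LinearMap.proj_apply, smul_eq_mul]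

def Phi (e : ℕ) (w : Fin L → F2) : (Fin (e + L) → F2) →ₗ[F2] (Fin e → F2) × F2 :=
  (LinearMap.funLeft F2 F2 (gg1 e L)).prod ((dotLin w).comp (LinearMap.funLeft F2 F2 (gg2 e L)))

lemma Phi_apply (w : Fin L → F2) (x : Fin (e + L) → F2) :
    Phi e w x = (x ∘ gg1 e L, dotF w (x ∘ gg2 e L)) := by
  simp only [Phi, LinearMap.prod_apply, Function.prod, LinearMap.comp_apply, dotLin_apply,
    Prod.mk.injEq]
  exact ⟨rfl, rfl⟩

def TT (e : ℕ) (w : Fin L → F2) (c : (Fin e → F2) × F2) :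
    AffineSubspace F2 (Fin (e + L) → F2) where
  carrier := {x | Phi e w x = c}
  smul_vsub_vadd_mem' := by
    intro t p1 p2 p3 h1 h2 h3
    simp only [Set.mem_setOf_eq] at h1 h2 h3 ⊢
    rw [vsub_eq_sub, vadd_eq_add, map_add, map_smul, map_sub, h1, h2, h3, sub_self, smul_zero,
      zero_add]

lemma mem_TT {w : Fin L → F2} {c : (Fin e → F2) × F2} {x : Fin (e + L) → F2} :
    x ∈ TT e w c ↔ (x ∘ gg1 e L = c.1 ∧ dotF w (x ∘ gg2 e L) = c.2) := by
  change Phi e w x = c ↔ _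
  rw [Phi_apply, Prod.ext_iff]

lemma exists_sol {w : Fin L → F2} (hw : w ≠ 0) (c : (Fin e → F2) × F2) :
    ∃ x, Phi e w x = c := by
  obtain ⟨j0, hj0⟩ : ∃ j, w j ≠ 0 := by
    by_contra hc; push_neg at hc; exact hw (funext fun j => hc j)
  have hwj0 : w j0 = 1 := f2_ne_zero hj0
  refine ⟨fun i => if h : i.1 < e then c.1 ⟨i.1, h⟩ else if i = gg2 e L j0 then c.2 else 0, ?_⟩
  rw [Phi_apply]
  have h1 : ((fun i => if h : i.1 < e then c.1 ⟨i.1, h⟩ else if i = gg2 e L j0 then c.2 else 0)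
      ∘ gg1 e L) = c.1 := by
    funext i
    have hi : (gg1 e L i).1 < e := i.2
    simp only [Function.comp_apply]
    rw [dif_pos hi]
    exact congrArg c.1 (Fin.ext rfl)
  have h2 : ((fun i => if h : i.1 < e then c.1 ⟨i.1, h⟩ else if i = gg2 e L j0 then c.2 else 0)
      ∘ gg2 e L) = fun j => if j = j0 then c.2 else 0 := by
    funext j
    have hj : ¬ (gg2 e L j).1 < e := by simp [gg2]
    simp only [Function.comp_apply]
    rw [dif_neg hj]
    by_cases hjj : j = j0
    · rw [if_pos hjj, if_pos (by rw [hjj])]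
    · rw [if_neg hjj, if_neg (fun hc => hjj (gg2_inj e L hc))]
  rw [h1, h2]
  have h3 : dotF w (fun j => if j = j0 then c.2 else 0) = c.2 := by
    unfold dotF
    rw [Finset.sum_eq_single j0]
    · simp [hwj0]
    · intro b _ hb; simp [hb]
    · simp
  rw [h3]

lemma TT_nonempty {w : Fin L → F2} (hw : w ≠ 0) (c : (Fin e → F2) × F2) :
    ((TT e w c : Set (Fin (e + L) → F2))).Nonempty := by
  obtain ⟨x, hx⟩ := exists_sol hw c
  exact ⟨x, hx⟩

lemma TT_finrank {w : Fin L → F2} (hw : w ≠ 0) (c : (Fin e → F2) × F2) :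
    Module.finrank F2 (TT e w c).direction = L - 1 := by
  obtain ⟨x0, hx0⟩ := exists_sol hw c
  have hT : TT e w c = AffineSubspace.mk' x0 (LinearMap.ker (Phi e w)) := by
    ext y
    rw [AffineSubspace.mem_mk', LinearMap.mem_ker, vsub_eq_sub, map_sub, hx0,
      sub_eq_zero]
    exact Iff.rfl
  rw [hT, AffineSubspace.direction_mk']
  have hrange : LinearMap.range (Phi e w) = ⊤ := by
    rw [LinearMap.range_eq_top]
    intro c'
    obtain ⟨x, hx⟩ := exists_sol hw c'
    exact ⟨x, hx⟩
  have hrn := LinearMap.finrank_range_add_finrank_ker (Phi e w)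
  rw [hrange] at hrn
  have h1 : Module.finrank F2 (⊤ : Submodule F2 ((Fin e → F2) × F2)) = e + 1 := by
    rw [finrank_top]
    rw [Module.finrank_prod, Module.finrank_pi, Module.finrank_self]
    simp
  have h2 : Module.finrank F2 (Fin (e + L) → F2) = e + L := by
    rw [Module.finrank_pi]
    simp
  rw [h1, h2] at hrn
  have hL : 1 ≤ L := by
    obtain ⟨j0, _⟩ : ∃ j, w j ≠ 0 := by
      by_contra hc; push_neg at hc; exact hw (funext fun j => hc j)
    have := j0.2
    omega
  omega

lemma zero_comp_gg1 : ((0 : Fin (e + L) → F2) ∘ gg1 e L) = 0 := rfl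

lemma zero_comp_gg2 : ((0 : Fin (e + L) → F2) ∘ gg2 e L) = 0 := rfl

lemma eq_zero_iff_comps {x : Fin (e + L) → F2} :
    x = 0 ↔ (x ∘ gg1 e L = 0 ∧ x ∘ gg2 e L = 0) := by
  constructor
  · rintro rfl; exact ⟨rfl, rfl⟩
  · rintro ⟨h1, h2⟩
    funext i
    by_cases hi : i.1 < e
    · have := congrFun h1 ⟨i.1, hi⟩
      simpa [gg1, Function.comp, Fin.eta] using this
    · have hle : e ≤ i.1 := by omega
      have hi2 := i.2
      obtain ⟨j', hj'⟩ : ∃ j' : Fin L, gg2 e L j' = i :=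
        ⟨⟨i.1 - e, by omega⟩, Fin.ext (by simp [gg2]; omega)⟩
      have hx := congrFun h2 j'
      rw [Function.comp_apply, hj'] at hx
      simpa using hx

end Geo

lemma mem_TT' {e L : ℕ} {w : Fin L → F2} {c1 : Fin e → F2} {c2 : F2} {x : Fin (e + L) → F2} :
    x ∈ TT e w (c1, c2) ↔ (x ∘ gg1 e L = c1 ∧ dotF w (x ∘ gg2 e L) = c2) := mem_TT

lemma f2_01 : (0 : F2) ≠ 1 := by decide

section Constr

variable (e m k : ℕ)

def w0 (m : ℕ) : Fin (m + 1) → F2 := fun _ => 1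

lemma w0_ne (m : ℕ) : (w0 m) ≠ 0 := fun h => by
  have := congrFun h ⟨0, by omega⟩
  simp [w0] at this

def Houter : Multiset (AffineSubspace F2 (Fin (e + (m + 1)) → F2)) :=
  (univ.erase (0 : Fin e → F2)).val.bind (fun u =>
    Multiset.replicate k (TT e (w0 m) (u, 0)) + Multiset.replicate k (TT e (w0 m) (u, 1)))

def Hpairs (P : ℕ) : Multiset (AffineSubspace F2 (Fin (e + (m + 1)) → F2)) :=
  Multiset.replicate P (TT e (w0 m) (0, 0)) + Multiset.replicate P (TT e (w0 m) (0, 1))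

def Hmain1 (q : ℕ) : Multiset (AffineSubspace F2 (Fin (e + (m + 1)) → F2)) :=
  (univ.erase (0 : Fin (m + 1) → F2)).val.bind (fun w => Multiset.replicate q (TT e w (0, 1)))

def Hmain0 (y : Fin (m + 1) → F2) : Multiset (AffineSubspace F2 (Fin (e + (m + 1)) → F2)) :=
  ((univ : Finset (Fin (m + 1) → F2)).filter (fun w => dotF w y = 1)).val.map
    (fun w => TT e w (0, 1))

lemma card_Houter : Multiset.card (Houter e m k) = (2 ^ e - 1) * (k + k) := by
  rw [Houter, Multiset.card_bind]
  have h1 : ∀ u : Fin e → F2, (Multiset.card ∘ fun u =>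
      Multiset.replicate k (TT e (w0 m) (u, 0)) + Multiset.replicate k (TT e (w0 m) (u, 1))) u
      = k + k := by
    intro u
    simp [Multiset.card_replicate]
  rw [Multiset.map_congr rfl (fun u _ => h1 u)]
  rw [Multiset.map_const', Multiset.sum_replicate, smul_eq_mul]
  congr 1
  rw [← Finset.card_def, Finset.card_erase_of_mem (Finset.mem_univ _), Finset.card_univ,
    Fintype.card_fun]
  simp [ZMod]

lemma card_Hpairs (P : ℕ) : Multiset.card (Hpairs e m P) = P + P := by
  simp [Hpairs, Multiset.card_replicate]

lemma card_Hmain1 (q : ℕ) : Multiset.card (Hmain1 e m q) = (2 ^ (m + 1) - 1) * q := by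
  rw [Hmain1, Multiset.card_bind]
  have h1 : ∀ w : Fin (m + 1) → F2, (Multiset.card ∘ fun w =>
      Multiset.replicate q (TT e w ((0 : Fin e → F2), (1 : F2)))) w = q := by
    intro w
    simp [Multiset.card_replicate]
  rw [Multiset.map_congr rfl (fun w _ => h1 w)]
  rw [Multiset.map_const', Multiset.sum_replicate, smul_eq_mul]
  congr 1
  rw [← Finset.card_def, Finset.card_erase_of_mem (Finset.mem_univ _), Finset.card_univ,
    Fintype.card_fun]
  simp [ZMod]

lemma card_Hmain0 (y : Fin (m + 1) → F2) (hy : y ≠ 0) :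
    Multiset.card (Hmain0 e m y) = 2 ^ m := by
  rw [Hmain0, Multiset.card_map, ← Finset.card_def, card_dot_one hy]
  norm_num

lemma covCount_Houter (x : Fin (e + (m + 1)) → F2) :
    covCount (e + (m + 1)) (Houter e m k) x
      = if x ∘ gg1 e (m + 1) = 0 then 0 else k := by
  rw [covCount, Houter, countP_bind]
  have hterm : ∀ u : Fin e → F2,
      Multiset.countP (fun S => x ∈ S)
        (Multiset.replicate k (TT e (w0 m) (u, 0)) + Multiset.replicate k (TT e (w0 m) (u, 1)))
      = (if x ∈ TT e (w0 m) (u, 0) then k else 0) + (if x ∈ TT e (w0 m) (u, 1) then k else 0) := by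
    intro u
    rw [Multiset.countP_add, countP_replicate, countP_replicate]
  rw [Multiset.map_congr rfl (fun u _ => hterm u)]
  have hsum : ((univ.erase (0 : Fin e → F2)).val.map (fun u =>
      (if x ∈ TT e (w0 m) (u, 0) then k else 0) + (if x ∈ TT e (w0 m) (u, 1) then k else 0))).sum
      = ∑ u ∈ univ.erase (0 : Fin e → F2),
        ((if x ∈ TT e (w0 m) (u, 0) then k else 0) + (if x ∈ TT e (w0 m) (u, 1) then k else 0)) :=
    rfl
  rw [hsum]
  by_cases hpx : x ∘ gg1 e (m + 1) = 0
  · rw [if_pos hpx]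
    apply Finset.sum_eq_zero
    intro u hu
    have hu0 : u ≠ 0 := Finset.ne_of_mem_erase hu
    have h1 : ¬ (x ∈ TT e (w0 m) (u, 0)) :=
      fun hc => hu0 ((mem_TT'.mp hc).1.symm.trans hpx)
    have h2 : ¬ (x ∈ TT e (w0 m) (u, 1)) :=
      fun hc => hu0 ((mem_TT'.mp hc).1.symm.trans hpx)
    rw [if_neg h1, if_neg h2]
    rfl
  · rw [if_neg hpx]
    rw [Finset.sum_eq_single_of_mem (x ∘ gg1 e (m + 1))
      (Finset.mem_erase.mpr ⟨hpx, Finset.mem_univ _⟩)]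
    · rcases f2_cases (dotF (w0 m) (x ∘ gg2 e (m + 1))) with h0 | h1
      · rw [if_pos (mem_TT'.mpr ⟨rfl, h0⟩),
          if_neg (fun hc => f2_01 (h0.symm.trans (mem_TT'.mp hc).2)), add_zero]
      · rw [if_pos (mem_TT'.mpr ⟨rfl, h1⟩),
          if_neg (fun hc => f2_01 ((mem_TT'.mp hc).2.symm.trans h1)), zero_add]
    · intro u _ hu
      have h1 : ¬ (x ∈ TT e (w0 m) (u, 0)) := fun hc => hu ((mem_TT'.mp hc).1.symm)
      have h2 : ¬ (x ∈ TT e (w0 m) (u, 1)) := fun hc => hu ((mem_TT'.mp hc).1.symm)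
      rw [if_neg h1, if_neg h2]
      rfl

lemma covCount_Hpairs (P : ℕ) (x : Fin (e + (m + 1)) → F2) :
    covCount (e + (m + 1)) (Hpairs e m P) x
      = if x ∘ gg1 e (m + 1) = 0 then P else 0 := by
  rw [covCount, Hpairs, Multiset.countP_add, countP_replicate, countP_replicate]
  by_cases hpx : x ∘ gg1 e (m + 1) = 0
  · rw [if_pos hpx]
    rcases f2_cases (dotF (w0 m) (x ∘ gg2 e (m + 1))) with h0 | h1
    · rw [if_pos (mem_TT'.mpr ⟨hpx, h0⟩),
        if_neg (fun hc => f2_01 (h0.symm.trans (mem_TT'.mp hc).2)), add_zero]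
    · rw [if_pos (mem_TT'.mpr ⟨hpx, h1⟩),
        if_neg (fun hc => f2_01 ((mem_TT'.mp hc).2.symm.trans h1)), zero_add]
  · rw [if_neg hpx]
    have h1 : ¬ (x ∈ TT e (w0 m) ((0 : Fin e → F2), (0 : F2))) :=
      fun hc => hpx (mem_TT'.mp hc).1
    have h2 : ¬ (x ∈ TT e (w0 m) ((0 : Fin e → F2), (1 : F2))) :=
      fun hc => hpx (mem_TT'.mp hc).1
    rw [if_neg h1, if_neg h2]

lemma covCount_Hmain1 (q : ℕ) (x : Fin (e + (m + 1)) → F2) :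
    covCount (e + (m + 1)) (Hmain1 e m q) x
      = if x ∘ gg1 e (m + 1) = 0
        then q * ((univ : Finset (Fin (m + 1) → F2)).filter
          (fun w => dotF w (x ∘ gg2 e (m + 1)) = 1)).card
        else 0 := by
  rw [covCount, Hmain1, countP_bind]
  have hterm : ∀ w : Fin (m + 1) → F2,
      Multiset.countP (fun S => x ∈ S) (Multiset.replicate q (TT e w (0, 1)))
      = if (x ∘ gg1 e (m + 1) = 0 ∧ dotF w (x ∘ gg2 e (m + 1)) = 1) then q else 0 := by
    intro w
    rw [countP_replicate]
    congr 1
    exact propext mem_TT'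
  rw [Multiset.map_congr rfl (fun w _ => hterm w)]
  have hsum : ((univ.erase (0 : Fin (m + 1) → F2)).val.map (fun w =>
      if (x ∘ gg1 e (m + 1) = 0 ∧ dotF w (x ∘ gg2 e (m + 1)) = 1) then q else 0)).sum
      = ∑ w ∈ univ.erase (0 : Fin (m + 1) → F2),
        (if (x ∘ gg1 e (m + 1) = 0 ∧ dotF w (x ∘ gg2 e (m + 1)) = 1) then q else 0) := rfl
  rw [hsum]
  by_cases hpx : x ∘ gg1 e (m + 1) = 0
  · rw [if_pos hpx]
    have hcong : ∀ w ∈ univ.erase (0 : Fin (m + 1) → F2),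
        (if (x ∘ gg1 e (m + 1) = 0 ∧ dotF w (x ∘ gg2 e (m + 1)) = 1) then q else 0)
        = if dotF w (x ∘ gg2 e (m + 1)) = 1 then q else 0 := by
      intro w _
      by_cases hd : dotF w (x ∘ gg2 e (m + 1)) = 1
      · rw [if_pos ⟨hpx, hd⟩, if_pos hd]
      · rw [if_neg (fun hc => hd hc.2), if_neg hd]
    rw [Finset.sum_congr rfl hcong, ← Finset.sum_filter, Finset.sum_const, smul_eq_mul, mul_comm]
    have h0nm : (0 : Fin (m + 1) → F2) ∉
        (univ : Finset (Fin (m + 1) → F2)).filter (fun w => dotF w (x ∘ gg2 e (m + 1)) = 1) := by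
      intro hc
      rw [Finset.mem_filter] at hc
      have := hc.2
      rw [dotF_zero_left] at this
      exact f2_01 this
    rw [Finset.filter_erase, Finset.erase_eq_of_notMem h0nm]
  · rw [if_neg hpx]
    apply Finset.sum_eq_zero
    intro w _
    rw [if_neg (fun hc => hpx hc.1)]

lemma covCount_Hmain0 (y : Fin (m + 1) → F2) (x : Fin (e + (m + 1)) → F2) :
    covCount (e + (m + 1)) (Hmain0 e m y) x
      = if x ∘ gg1 e (m + 1) = 0
        then ((univ : Finset (Fin (m + 1) → F2)).filter
          (fun w => dotF w y = 1 ∧ dotF w (x ∘ gg2 e (m + 1)) = 1)).card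
        else 0 := by
  rw [covCount, Hmain0, Multiset.countP_map, ← Finset.filter_val, ← Finset.card_def,
    Finset.filter_filter]
  by_cases hpx : x ∘ gg1 e (m + 1) = 0
  · rw [if_pos hpx]
    congr 1
    apply Finset.filter_congr
    intro w _
    constructor
    · rintro ⟨h1, hm⟩
      exact ⟨h1, (mem_TT'.mp hm).2⟩
    · rintro ⟨h1, h2⟩
      exact ⟨h1, mem_TT'.mpr ⟨hpx, h2⟩⟩
  · rw [if_neg hpx]
    rw [Finset.card_eq_zero, Finset.filter_eq_empty_iff]
    intro w _
    rintro ⟨_, hm⟩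
    exact hpx (mem_TT'.mp hm).1

end Constr

lemma good_members (e m k q P : ℕ) (y : Fin (m + 1) → F2) :
    ∀ H0 : Multiset (AffineSubspace F2 (Fin (e + (m + 1)) → F2)),
      (H0 = Houter e m k ∨ H0 = Hpairs e m P ∨ H0 = Hmain1 e m q ∨ H0 = Hmain0 e m y) →
      ∀ S ∈ H0, (S : Set (Fin (e + (m + 1)) → F2)).Nonempty ∧
        Module.finrank F2 S.direction = (m + 1) - 1 := by
  have key : ∀ (w : Fin (m + 1) → F2), w ≠ 0 → ∀ c : (Fin e → F2) × F2,
      ((TT e w c : Set (Fin (e + (m + 1)) → F2)).Nonempty ∧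
        Module.finrank F2 (TT e w c).direction = (m + 1) - 1) :=
    fun w hw c => ⟨TT_nonempty hw c, TT_finrank hw c⟩
  rintro H0 (rfl | rfl | rfl | rfl) S hS
  · rw [Houter, Multiset.mem_bind] at hS
    obtain ⟨u, _, hS⟩ := hS
    rcases Multiset.mem_add.mp hS with h | h <;>
      rw [Multiset.eq_of_mem_replicate h] <;> exact key _ (w0_ne m) _
  · rcases Multiset.mem_add.mp hS with h | h <;>
      rw [Multiset.eq_of_mem_replicate h] <;> exact key _ (w0_ne m) _
  · rw [Hmain1, Multiset.mem_bind] at hS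
    obtain ⟨w, hw, hS⟩ := hS
    rw [Multiset.eq_of_mem_replicate hS]
    refine key _ ?_ _
    have : w ∈ univ.erase (0 : Fin (m + 1) → F2) := hw
    exact Finset.ne_of_mem_erase this
  · rw [Hmain0, Multiset.mem_map] at hS
    obtain ⟨w, hw, rfl⟩ := hS
    refine key _ ?_ _
    intro hc
    have hw' : w ∈ (univ : Finset (Fin (m + 1) → F2)).filter (fun w => dotF w y = 1) := hw
    have := (Finset.mem_filter.mp hw').2
    rw [hc, dotF_zero_left] at this
    exact f2_01 this

lemma covCount_split (n : ℕ) (A B C : Multiset (AffineSubspace F2 (Fin n → F2)))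
    (x : Fin n → F2) :
    covCount n (A + (B + C)) x = covCount n A x + (covCount n B x + covCount n C x) := by
  rw [covCount, Multiset.countP_add, Multiset.countP_add]
  rfl

lemma upper1 (e m k : ℕ) (hk : 2 ^ m ≤ k) :
    ∃ H, IsCover (e + (m + 1)) k (e + 1) H ∧
      Multiset.card H = 2 ^ (e + 1) * k - k / 2 ^ m := by
  have hBpos : 0 < 2 ^ m := Nat.pow_pos (by omega)
  have hBq : 2 ^ m * (k / 2 ^ m) + k % 2 ^ m = k := Nat.div_add_mod k (2 ^ m)
  have hrB : k % 2 ^ m < 2 ^ m := Nat.mod_lt k hBpos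
  refine ⟨Houter e m k + (Hmain1 e m (k / 2 ^ m) + Hpairs e m (k % 2 ^ m)), ⟨?_, ?_, ?_⟩, ?_⟩
  · intro S hS
    have hnd : (e + (m + 1)) - (e + 1) = (m + 1) - 1 := by omega
    rw [hnd]
    rcases Multiset.mem_add.mp hS with h | h
    · exact good_members e m k (k / 2 ^ m) (k % 2 ^ m) (w0 m) _ (Or.inl rfl) S h
    · rcases Multiset.mem_add.mp h with h' | h'
      · exact good_members e m k (k / 2 ^ m) (k % 2 ^ m) (w0 m) _ (Or.inr (Or.inr (Or.inl rfl))) S h'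
      · exact good_members e m k (k / 2 ^ m) (k % 2 ^ m) (w0 m) _ (Or.inr (Or.inl rfl)) S h'
  · intro x hx
    rw [covCount_split, covCount_Houter, covCount_Hmain1, covCount_Hpairs]
    by_cases hpx : x ∘ gg1 e (m + 1) = 0
    · have hzx : x ∘ gg2 e (m + 1) ≠ 0 := by
        intro hc
        exact hx (eq_zero_iff_comps.mpr ⟨hpx, hc⟩)
      rw [if_pos hpx, if_pos hpx, if_pos hpx, card_dot_one hzx]
      have : (m + 1) - 1 = m := by omega
      rw [this]
      calc k = 2 ^ m * (k / 2 ^ m) + k % 2 ^ m := hBq.symm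
      _ = k / 2 ^ m * 2 ^ m + k % 2 ^ m := by ring
      _ ≤ 0 + (k / 2 ^ m * 2 ^ m + k % 2 ^ m) := by omega
    · rw [if_neg hpx, if_neg hpx, if_neg hpx]
      omega
  · rw [covCount_split, covCount_Houter, covCount_Hmain1, covCount_Hpairs]
    rw [if_pos zero_comp_gg1, if_pos zero_comp_gg1, if_pos zero_comp_gg1]
    have hfe : ((univ : Finset (Fin (m + 1) → F2)).filter
        (fun w => dotF w ((0 : Fin (e + (m + 1)) → F2) ∘ gg2 e (m + 1)) = 1)).card = 0 := by
      rw [Finset.card_eq_zero, Finset.filter_eq_empty_iff]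
      intro w _
      rw [zero_comp_gg2, dotF_zero_right]
      exact fun hc => f2_01 hc
    rw [hfe]
    have : 0 < k := lt_of_lt_of_le hBpos hk
    omega
  · rw [Multiset.card_add, Multiset.card_add, card_Houter, card_Hmain1, card_Hpairs]
    have e1 : (2 ^ e - 1) * (k + k) = 2 ^ e * (k + k) - (k + k) := by
      rw [Nat.sub_mul, one_mul]
    have e2 : (2 ^ (m + 1) - 1) * (k / 2 ^ m) = 2 ^ m * (k / 2 ^ m) + 2 ^ m * (k / 2 ^ m)
        - k / 2 ^ m := by
      rw [Nat.sub_mul, one_mul, pow_succ]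
      ring_nf
    have e3 : 2 ^ (e + 1) * k = 2 ^ e * (k + k) := by ring
    have hA : k + k ≤ 2 ^ e * (k + k) := Nat.le_mul_of_pos_left _ (by positivity)
    have hQ : k / 2 ^ m ≤ 2 ^ m * (k / 2 ^ m) := Nat.le_mul_of_pos_left _ hBpos
    rw [e1, e2, e3]
    omega

lemma upper0 (e m k : ℕ) (hm : 1 ≤ m) (hk1 : 2 ^ (m - 1) ≤ k) (hk2 : k < 2 ^ m) :
    ∃ H, IsCover (e + (m + 1)) k (e + 1) H ∧
      Multiset.card H = 2 ^ (e + 1) * k - k / 2 ^ m := by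
  have hq0 : k / 2 ^ m = 0 := Nat.div_eq_of_lt hk2
  have h1m : (1 : ℕ) ≤ 2 ^ (m - 1) := Nat.one_le_two_pow
  have hmm : 2 ^ m = 2 ^ (m - 1) + 2 ^ (m - 1) := by
    conv_lhs => rw [show m = (m - 1) + 1 by omega]
    rw [pow_succ]
    ring
  refine ⟨Houter e m k + (Hmain0 e m (w0 m) + Hpairs e m (k - 2 ^ (m - 1))), ⟨?_, ?_, ?_⟩, ?_⟩
  · intro S hS
    have hnd : (e + (m + 1)) - (e + 1) = (m + 1) - 1 := by omega
    rw [hnd]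
    rcases Multiset.mem_add.mp hS with h | h
    · exact good_members e m k 0 (k - 2 ^ (m - 1)) (w0 m) _ (Or.inl rfl) S h
    · rcases Multiset.mem_add.mp h with h' | h'
      · exact good_members e m k 0 (k - 2 ^ (m - 1)) (w0 m) _ (Or.inr (Or.inr (Or.inr rfl))) S h'
      · exact good_members e m k 0 (k - 2 ^ (m - 1)) (w0 m) _ (Or.inr (Or.inl rfl)) S h'
  · intro x hx
    rw [covCount_split, covCount_Houter, covCount_Hmain0, covCount_Hpairs]
    by_cases hpx : x ∘ gg1 e (m + 1) = 0
    · have hzx : x ∘ gg2 e (m + 1) ≠ 0 := by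
        intro hc
        exact hx (eq_zero_iff_comps.mpr ⟨hpx, hc⟩)
      rw [if_pos hpx, if_pos hpx, if_pos hpx]
      by_cases hzy : x ∘ gg2 e (m + 1) = w0 m
      · have hcc : ((univ : Finset (Fin (m + 1) → F2)).filter
            (fun w => dotF w (w0 m) = 1 ∧ dotF w (x ∘ gg2 e (m + 1)) = 1)).card
            = 2 ^ ((m + 1) - 1) := by
          rw [← card_dot_one (w0_ne m)]
          congr 1
          apply Finset.filter_congr
          intro w _
          rw [hzy]
          exact ⟨fun h => h.1, fun h => ⟨h, h⟩⟩
        rw [hcc]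
        have : (m + 1) - 1 = m := by omega
        rw [this]
        omega
      · have hcc : ((univ : Finset (Fin (m + 1) → F2)).filter
            (fun w => dotF w (w0 m) = 1 ∧ dotF w (x ∘ gg2 e (m + 1)) = 1)).card
            = 2 ^ ((m + 1) - 2) := card_dot_pair (w0_ne m) hzx (fun h => hzy h.symm)
        rw [hcc]
        have : (m + 1) - 2 = m - 1 := by omega
        rw [this]
        omega
    · rw [if_neg hpx, if_neg hpx, if_neg hpx]
      omega
  · rw [covCount_split, covCount_Houter, covCount_Hmain0, covCount_Hpairs]
    rw [if_pos zero_comp_gg1, if_pos zero_comp_gg1, if_pos zero_comp_gg1]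
    have hfe : ((univ : Finset (Fin (m + 1) → F2)).filter
        (fun w => dotF w (w0 m) = 1 ∧
          dotF w ((0 : Fin (e + (m + 1)) → F2) ∘ gg2 e (m + 1)) = 1)).card = 0 := by
      rw [Finset.card_eq_zero, Finset.filter_eq_empty_iff]
      intro w _
      rw [zero_comp_gg2, dotF_zero_right]
      exact fun hc => f2_01 hc.2
    rw [hfe]
    omega
  · rw [Multiset.card_add, Multiset.card_add, card_Houter, card_Hmain0 e m (w0 m) (w0_ne m),
      card_Hpairs, hq0]
    have e1 : (2 ^ e - 1) * (k + k) = 2 ^ e * (k + k) - (k + k) := by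
      rw [Nat.sub_mul, one_mul]
    have e3 : 2 ^ (e + 1) * k = 2 ^ e * (k + k) := by ring
    have hA : k + k ≤ 2 ^ e * (k + k) := Nat.le_mul_of_pos_left _ (by positivity)
    rw [e1, e3]
    omega

lemma card_mem_affine (n m' : ℕ) (S : AffineSubspace F2 (Fin n → F2))
    (hne : (S : Set (Fin n → F2)).Nonempty)
    (hdim : Module.finrank F2 S.direction = m') :
    ((univ : Finset (Fin n → F2)).filter (fun x => x ∈ S)).card = 2 ^ m' := by
  obtain ⟨x0, hx0⟩ := hne
  have hx0' : x0 ∈ S := hx0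
  have E : S.direction ≃ {x : Fin n → F2 // x ∈ S} := {
    toFun := fun v => ⟨v.1 +ᵥ x0, AffineSubspace.vadd_mem_of_mem_direction v.2 hx0'⟩
    invFun := fun y => ⟨y.1 -ᵥ x0, AffineSubspace.vsub_mem_direction y.2 hx0'⟩
    left_inv := fun v => by
      ext
      simp [vsub_eq_sub, vadd_eq_add]
    right_inv := fun y => by
      ext
      simp [vsub_eq_sub, vadd_eq_add] }
  have h1 : ((univ : Finset (Fin n → F2)).filter (fun x => x ∈ S)).card
      = Fintype.card {x : Fin n → F2 // x ∈ S} := (Fintype.card_subtype _).symm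
  rw [h1, ← Fintype.card_congr E]
  rw [Module.card_eq_pow_finrank (K := F2) (V := S.direction), hdim]
  congr 1

lemma sum_covCount (n m' : ℕ) :
    ∀ H : Multiset (AffineSubspace F2 (Fin n → F2)),
      (∀ S ∈ H, (S : Set (Fin n → F2)).Nonempty ∧ Module.finrank F2 S.direction = m') →
      ∑ x : Fin n → F2, covCount n H x = Multiset.card H * 2 ^ m' := by
  intro H
  induction H using Multiset.induction_on with
  | empty => intro _; simp [covCount]
  | cons S H ih =>
    intro hgood
    have hS := hgood S (Multiset.mem_cons_self S H)
    have hcons : ∀ x, covCount n (S ::ₘ H) x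
        = covCount n H x + (if x ∈ S then 1 else 0) := by
      intro x
      rw [covCount, covCount, Multiset.countP_cons]
    rw [Finset.sum_congr rfl (fun x _ => hcons x), Finset.sum_add_distrib]
    rw [ih (fun T hT => hgood T (Multiset.mem_cons_of_mem hT))]
    have hb : ∑ x : Fin n → F2, (if x ∈ S then 1 else 0)
        = ((univ : Finset (Fin n → F2)).filter (fun x => x ∈ S)).card := by
      rw [← Finset.sum_filter]
      simp
    rw [hb, card_mem_affine n m' S hS.1 hS.2, Multiset.card_cons]
    ring

lemma lower_bound (n k d : ℕ) (hd : 1 ≤ d) (hdn : d ≤ n)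
    (H : Multiset (AffineSubspace F2 (Fin n → F2))) (hc : IsCover n k d H) :
    2 ^ d * k - k / 2 ^ (n - d) ≤ Multiset.card H := by
  obtain ⟨hgood, hcov, h0⟩ := hc
  have hsum := sum_covCount n (n - d) H hgood
  have hcard_univ : (univ : Finset (Fin n → F2)).card = 2 ^ n := by
    rw [Finset.card_univ, Fintype.card_fun]
    simp [ZMod]
  have hsplit : ∑ x ∈ (univ : Finset (Fin n → F2)).erase 0, covCount n H x + covCount n H 0
      = ∑ x : Fin n → F2, covCount n H x :=
    Finset.sum_erase_add _ _ (Finset.mem_univ 0)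
  have hge : (2 ^ n - 1) * k ≤ ∑ x ∈ (univ : Finset (Fin n → F2)).erase 0, covCount n H x := by
    calc (2 ^ n - 1) * k = ∑ _x ∈ (univ : Finset (Fin n → F2)).erase 0, k := by
          rw [Finset.sum_const, smul_eq_mul, Finset.card_erase_of_mem (Finset.mem_univ _),
            hcard_univ]
    _ ≤ _ := Finset.sum_le_sum (fun x hx => hcov x (Finset.ne_of_mem_erase hx))
  -- combine
  have hmain : (2 ^ n - 1) * k ≤ Multiset.card H * 2 ^ (n - d) := by
    omega
  -- arithmetic
  set B := 2 ^ (n - d) with hB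
  set D := 2 ^ d with hD
  have hBpos : 0 < B := Nat.pow_pos (by omega)
  have hDpos : 0 < D := Nat.pow_pos (by omega)
  have hnd : 2 ^ n = D * B := by
    rw [hD, hB, ← pow_add]
    congr 1
    omega
  by_contra hcon
  push_neg at hcon
  set N := Multiset.card H with hN
  set Q := k / B with hQ
  set R := k % B with hR
  have hQR : B * Q + R = k := Nat.div_add_mod k B
  have hRB : R < B := Nat.mod_lt k hBpos
  have hconn : N + 1 + Q ≤ D * k := by
    have hQk : Q ≤ D * k := le_trans (Nat.div_le_self k B) (Nat.le_mul_of_pos_left k hDpos)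
    omega
  have h1 : (N + 1 + Q) * B ≤ D * k * B := Nat.mul_le_mul_right B hconn
  have h2 : (N + 1 + Q) * B = N * B + B + Q * B := by ring
  have h3 : Q * B + R = k := by rw [mul_comm]; exact hQR
  have h4 : (2 ^ n - 1) * k = D * B * k - k := by
    rw [hnd, Nat.sub_mul, one_mul]
  have h5 : D * B * k = D * k * B := by ring
  have h6 : k ≤ D * B * k := Nat.le_mul_of_pos_left k (by positivity)
  rw [h4, h5] at hmain
  rw [h2] at h1
  rw [h5] at h6
  -- now: N * B + B + Q * B ≤ D*k*B, D*k*B − k ≤ N * B, Q*B + R = k, R < B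
  omega

theorem stmt0 (n k d : ℕ) (hk : 1 ≤ k) (hd : 1 ≤ d) (hdn : d ≤ n)
    (hbig : 2 ^ (n - d - 1) ≤ k) :
    f n k d = 2 ^ d * k - k / 2 ^ (n - d) := by
  obtain ⟨e, m, hd', hn'⟩ : ∃ e m, d = e + 1 ∧ n = e + (m + 1) := ⟨d - 1, n - d, by omega, by omega⟩
  subst hd' hn'
  have hm : (e + (m + 1)) - (e + 1) = m := by omega
  have hupper : ∃ H, IsCover (e + (m + 1)) k (e + 1) H ∧
      Multiset.card H = 2 ^ (e + 1) * k - k / 2 ^ m := by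
    by_cases hq : 2 ^ m ≤ k
    · exact upper1 e m k hq
    · push_neg at hq
      have hm1 : 1 ≤ m := by
        by_contra hc
        push_neg at hc
        have : m = 0 := by omega
        subst this
        simp at hq
        omega
      have hbig' : 2 ^ (m - 1) ≤ k := by
        have : (e + (m + 1)) - (e + 1) - 1 = m - 1 := by omega
        rw [this] at hbig
        exact hbig
      exact upper0 e m k hm1 hbig' hq
  obtain ⟨H, hcov, hcard⟩ := hupper
  have hmem : (2 ^ (e + 1) * k - k / 2 ^ ((e + (m + 1)) - (e + 1))) ∈
      {t | ∃ H, IsCover (e + (m + 1)) k (e + 1) H ∧ Multiset.card H = t} := by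
    rw [hm]
    exact ⟨H, hcov, hcard⟩
  apply le_antisymm
  · exact Nat.sInf_le hmem
  · apply le_csInf ⟨_, hmem⟩
    rintro b ⟨H', hcov', rfl⟩
    exact lower_bound (e + (m + 1)) k (e + 1) (by omega) (by omega) H' hcov'
end

section
/- Let n, k, d be integers with n ≥ d ≥ 1 and k ≥ 2. Then f(n,k,d) ≤ n + 2^d·k − d − 2. -/
open scoped Classical

noncomputable section Aux

namespace Stmt6Aux

/-- generic codim-d subspace given by d affine equations with coefficient rows `c`
and a solution point `b`. -/
def Sub (n d : ℕ) (c : Fin d → Fin n → F2) (b : Fin n → F2) :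
    AffineSubspace F2 (Fin n → F2) :=
  AffineSubspace.mk' b (LinearMap.ker (Matrix.mulVecLin (Matrix.of c)))

lemma mem_Sub {n d : ℕ} {c : Fin d → Fin n → F2} {b x : Fin n → F2} :
    x ∈ Sub n d c b ↔ ∀ j, ∑ i, c j i * x i = ∑ i, c j i * b i := by
  rw [Sub, AffineSubspace.mem_mk', LinearMap.mem_ker]
  rw [funext_iff]
  refine forall_congr' fun j => ?_
  simp only [Matrix.mulVecLin_apply, Matrix.mulVec, dotProduct, Matrix.of_apply,
    vsub_eq_sub, Pi.sub_apply, Pi.zero_apply, mul_sub, Finset.sum_sub_distrib, sub_eq_zero]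

lemma nonempty_Sub {n d : ℕ} (c : Fin d → Fin n → F2) (b : Fin n → F2) :
    ((Sub n d c b : AffineSubspace F2 (Fin n → F2)) : Set (Fin n → F2)).Nonempty :=
  ⟨b, AffineSubspace.self_mem_mk' _ _⟩

lemma finrank_Sub {n d : ℕ} (c : Fin d → Fin n → F2) (b : Fin n → F2)
    (σ : Fin d → Fin n) (hσ : ∀ j j', c j (σ j') = if j = j' then 1 else 0) :
    Module.finrank F2 (Sub n d c b).direction = n - d := by
  rw [Sub, AffineSubspace.direction_mk']
  have hsurj : Function.Surjective (Matrix.mulVecLin (Matrix.of c)) := by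
    intro t
    refine ⟨fun i => ∑ j', if i = σ j' then t j' else 0, ?_⟩
    funext j
    simp only [Matrix.mulVecLin_apply, Matrix.mulVec, dotProduct, Matrix.of_apply]
    calc ∑ i, c j i * ∑ j', (if i = σ j' then t j' else 0)
        = ∑ i, ∑ j', if i = σ j' then c j i * t j' else 0 := by
          refine Finset.sum_congr rfl fun i _ => ?_
          rw [Finset.mul_sum]
          exact Finset.sum_congr rfl fun j' _ => by split <;> simp
      _ = ∑ j', ∑ i, (if i = σ j' then c j i * t j' else 0) := Finset.sum_comm
      _ = ∑ j', c j (σ j') * t j' := by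
          refine Finset.sum_congr rfl fun j' _ => ?_
          simp
      _ = t j := by
          simp only [hσ]
          simp [Finset.sum_ite_eq]
  have h1 := LinearMap.finrank_range_add_finrank_ker (Matrix.mulVecLin (Matrix.of c))
  rw [LinearMap.range_eq_top.mpr hsurj] at h1
  have h2 : Module.finrank F2 (⊤ : Submodule F2 (Fin d → F2)) = d := by
    rw [finrank_top]; simp [Module.finrank_pi]
  have h3 : Module.finrank F2 (Fin n → F2) = n := by simp [Module.finrank_pi]
  omega


variable (n d : ℕ)

/-- The fiber over `p` of the projection to the first `d` coordinates. -/
def Fib (hdn : d ≤ n) (p : Fin d → F2) : AffineSubspace F2 (Fin n → F2) :=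
  Sub n d (fun j i => if i = Fin.castLE hdn j then 1 else 0)
          (fun i => if h : i.val < d then p ⟨i.val, h⟩ else 0)

lemma mem_Fib (hdn : d ≤ n) (p : Fin d → F2) {x : Fin n → F2} :
    x ∈ Fib n d hdn p ↔ ∀ j, x (Fin.castLE hdn j) = p j := by
  rw [Fib, mem_Sub]
  refine forall_congr' fun j => ?_
  have h1 : ∀ y : Fin n → F2, ∑ i, (if i = Fin.castLE hdn j then (1:F2) else 0) * y i
      = y (Fin.castLE hdn j) := by
    intro y
    rw [Finset.sum_eq_single (Fin.castLE hdn j)]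
    · simp
    · intro b _ hb; simp [hb]
    · simp
  rw [h1, h1]
  have : (Fin.castLE hdn j).val < d := j.isLt
  simp [this]

/-- `{x | x_j = 0 for j < d-1, x_{i0} = 1}`, used for `d ≤ i0.val`. -/
def G (hdn : d ≤ n) (i0 : Fin n) : AffineSubspace F2 (Fin n → F2) :=
  Sub n d (fun j i => if j.val < d - 1 then (if i = Fin.castLE hdn j then 1 else 0)
                      else (if i = i0 then 1 else 0))
          (fun i => if i = i0 then 1 else 0)

lemma mem_G (hd1 : 1 ≤ d) (hdn : d ≤ n) (i0 : Fin n) (hi0 : d ≤ i0.val) {x : Fin n → F2} :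
    x ∈ G n d hdn i0 ↔
      (∀ j : Fin d, j.val < d - 1 → x (Fin.castLE hdn j) = 0) ∧ x i0 = 1 := by
  have h1 : ∀ (a : Fin n) (y : Fin n → F2), ∑ i, (if i = a then (1:F2) else 0) * y i = y a := by
    intro a y
    rw [Finset.sum_eq_single a]
    · simp
    · intro b _ hb; simp [hb]
    · simp
  have key : x ∈ G n d hdn i0 ↔
      ∀ j : Fin d, (if j.val < d - 1 then x (Fin.castLE hdn j) else x i0)
        = (if j.val < d - 1 then 0 else 1) := by
    rw [G, mem_Sub]
    refine forall_congr' fun j => ?_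
    by_cases hj : j.val < d - 1
    · simp only [hj, if_true]
      rw [h1, h1]
      have : Fin.castLE hdn j ≠ i0 := by
        intro h
        have : (Fin.castLE hdn j).val = i0.val := by rw [h]
        simp at this
        omega
      simp [this]
    · simp only [hj, if_false]
      rw [h1, h1]
      simp
  rw [key]
  constructor
  · intro h
    refine ⟨fun j hj => by have := h j; rwa [if_pos hj, if_pos hj] at this, ?_⟩
    have := h ⟨d - 1, by omega⟩
    rwa [if_neg (by simp), if_neg (by simp)] at this
  · rintro ⟨hpre, hlast⟩ j
    by_cases hj : j.val < d - 1
    · rw [if_pos hj, if_pos hj]; exact hpre j hj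
    · rw [if_neg hj, if_neg hj]; exact hlast

/-- `{x | x_j = 0 for j < d-1, ∑_{i ≥ d-1} x_i = 1}`. -/
def Gsum (hdn : d ≤ n) : AffineSubspace F2 (Fin n → F2) :=
  Sub n d (fun j i => if j.val < d - 1 then (if i = Fin.castLE hdn j then 1 else 0)
                      else (if d - 1 ≤ i.val then 1 else 0))
          (fun i => if i.val = d - 1 then 1 else 0)

lemma mem_Gsum (hd1 : 1 ≤ d) (hdn : d ≤ n) {x : Fin n → F2} :
    x ∈ Gsum n d hdn ↔
      (∀ j : Fin d, j.val < d - 1 → x (Fin.castLE hdn j) = 0) ∧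
      (∑ i ∈ Finset.univ.filter (fun i : Fin n => d - 1 ≤ i.val), x i) = 1 := by
  have h1 : ∀ (a : Fin n) (y : Fin n → F2), ∑ i, (if i = a then (1:F2) else 0) * y i = y a := by
    intro a y
    rw [Finset.sum_eq_single a]
    · simp
    · intro b _ hb; simp [hb]
    · simp
  have hdn1 : d - 1 < n := by omega
  have key : x ∈ Gsum n d hdn ↔
      ∀ j : Fin d, (if j.val < d - 1 then x (Fin.castLE hdn j)
          else ∑ i ∈ Finset.univ.filter (fun i : Fin n => d - 1 ≤ i.val), x i)
        = (if j.val < d - 1 then 0 else 1) := by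
    rw [Gsum, mem_Sub]
    refine forall_congr' fun j => ?_
    by_cases hj : j.val < d - 1
    · simp only [hj, if_true]
      rw [h1, h1]
      have hne : ¬ ((j : ℕ) = d - 1) := by omega
      simp [hne]
    · simp only [hj, if_false]
      have h2 : ∑ i : Fin n, (if d - 1 ≤ i.val then (1:F2) else 0) * x i
          = ∑ i ∈ Finset.univ.filter (fun i : Fin n => d - 1 ≤ i.val), x i := by
        rw [Finset.sum_filter]
        refine Finset.sum_congr rfl fun (i : Fin n) _ => ?_
        by_cases hi : d - 1 ≤ i.val <;> simp [hi]
      have h3 : ∑ i : Fin n, (if d - 1 ≤ i.val then (1:F2) else 0) *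
          (if i.val = d - 1 then 1 else 0) = 1 := by
        rw [Finset.sum_eq_single (⟨d - 1, hdn1⟩ : Fin n)]
        · simp
        · intro b _ hb
          have : b.val ≠ d - 1 := fun h => hb (Fin.ext h)
          simp [this]
        · simp
      rw [h2, h3]
  rw [key]
  constructor
  · intro h
    refine ⟨fun j hj => by have := h j; rwa [if_pos hj, if_pos hj] at this, ?_⟩
    have := h ⟨d - 1, by omega⟩
    rwa [if_neg (by simp), if_neg (by simp)] at this
  · rintro ⟨hpre, hlast⟩ j
    by_cases hj : j.val < d - 1
    · rw [if_pos hj, if_pos hj]; exact hpre j hj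
    · rw [if_neg hj, if_neg hj]; exact hlast


lemma dims_Fib (hdn : d ≤ n) (p : Fin d → F2) :
    Module.finrank F2 (Fib n d hdn p).direction = n - d := by
  refine finrank_Sub _ _ (Fin.castLE hdn) ?_
  intro j j'
  by_cases h : j = j'
  · subst h; simp
  · have h2 : Fin.castLE hdn j' ≠ Fin.castLE hdn j :=
      fun hh => h ((Fin.castLE_inj.mp hh).symm)
    simp [h, h2]

lemma nonempty_Fib (hdn : d ≤ n) (p : Fin d → F2) :
    ((Fib n d hdn p : AffineSubspace F2 (Fin n → F2)) : Set (Fin n → F2)).Nonempty :=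
  nonempty_Sub _ _

lemma dims_G (hdn : d ≤ n) (i0 : Fin n) (hi0 : d ≤ i0.val) :
    Module.finrank F2 (G n d hdn i0).direction = n - d := by
  refine finrank_Sub _ _ (fun j' => if j'.val < d - 1 then Fin.castLE hdn j' else i0) ?_
  intro j j'
  by_cases hj : (j : ℕ) < d - 1 <;> by_cases hj' : (j' : ℕ) < d - 1
  · simp only [hj, hj', if_true]
    by_cases h : j = j'
    · subst h; simp
    · have h2 : Fin.castLE hdn j' ≠ Fin.castLE hdn j :=
        fun hh => h ((Fin.castLE_inj.mp hh).symm)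
      simp [h, h2]
  · have hne : j ≠ j' := by intro h; subst h; exact hj' hj
    have h2 : i0 ≠ Fin.castLE hdn j := by
      intro hh
      have : (i0 : ℕ) = (j : ℕ) := by rw [hh]; simp
      omega
    simp [hj, hj', hne, h2]
  · have hne : j ≠ j' := by intro h; subst h; exact hj hj'
    have h2 : Fin.castLE hdn j' ≠ i0 := by
      intro hh
      have : (j' : ℕ) = (i0 : ℕ) := by rw [← hh]; simp
      omega
    simp [hj, hj', hne, h2]
  · have hne : j = j' := by
      have h1 : (j : ℕ) = d - 1 := by omega
      have h2 : (j' : ℕ) = d - 1 := by omega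
      exact Fin.ext (h1.trans h2.symm)
    simp [hj, hj', hne]

lemma nonempty_G (hdn : d ≤ n) (i0 : Fin n) :
    ((G n d hdn i0 : AffineSubspace F2 (Fin n → F2)) : Set (Fin n → F2)).Nonempty :=
  nonempty_Sub _ _

lemma dims_Gsum (hd1 : 1 ≤ d) (hdn : d ≤ n) :
    Module.finrank F2 (Gsum n d hdn).direction = n - d := by
  have hdn1 : d - 1 < n := by omega
  refine finrank_Sub _ _
    (fun j' => if j'.val < d - 1 then Fin.castLE hdn j' else ⟨d - 1, hdn1⟩) ?_
  intro j j'
  by_cases hj : (j : ℕ) < d - 1 <;> by_cases hj' : (j' : ℕ) < d - 1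
  · simp only [hj, hj', if_true]
    by_cases h : j = j'
    · subst h; simp
    · have h2 : Fin.castLE hdn j' ≠ Fin.castLE hdn j :=
        fun hh => h ((Fin.castLE_inj.mp hh).symm)
      simp [h, h2]
  · have hne : j ≠ j' := by intro h; subst h; exact hj' hj
    have h2 : (⟨d - 1, hdn1⟩ : Fin n) ≠ Fin.castLE hdn j := by
      intro hh
      have : d - 1 = (j : ℕ) := by have := congrArg Fin.val hh; simpa using this
      omega
    simp [hj, hj', hne, h2]
  · have hne : j ≠ j' := by intro h; subst h; exact hj hj'
    simp only [hj, hj', if_true, if_false, hne]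
    rw [if_neg (by simp; omega)]
  · have hne : j = j' := by
      have h1 : (j : ℕ) = d - 1 := by omega
      have h2 : (j' : ℕ) = d - 1 := by omega
      exact Fin.ext (h1.trans h2.symm)
    simp [hj, hj', hne]

lemma nonempty_Gsum (hdn : d ≤ n) :
    ((Gsum n d hdn : AffineSubspace F2 (Fin n → F2)) : Set (Fin n → F2)).Nonempty :=
  nonempty_Sub _ _

lemma countP_replicate' {α : Type*} (p : α → Prop) [DecidablePred p] (a : α) (m : ℕ) :
    Multiset.countP p (Multiset.replicate m a) = if p a then m else 0 := by
  induction m with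
  | zero => simp
  | succ m ih =>
    rw [Multiset.replicate_succ, Multiset.countP_cons, ih]
    split <;> simp

def Pstar (d : ℕ) : Fin d → F2 := fun j => if j.val = d - 1 then 1 else 0

lemma Pstar_ne_zero (hd1 : 1 ≤ d) : Pstar d ≠ 0 := by
  intro h
  have := congrFun h ⟨d - 1, by omega⟩
  rw [Pstar] at this
  simp at this

def SetA (d : ℕ) : Finset (Fin d → F2) := ({0, Pstar d} : Finset (Fin d → F2))ᶜ

lemma card_SetA (hd1 : 1 ≤ d) : (SetA d).card = 2 ^ d - 2 := by
  rw [SetA, Finset.card_compl]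
  have h1 : Fintype.card (Fin d → F2) = 2 ^ d := by
    rw [Fintype.card_fun]
    simp [ZMod.card]
  have h2 : ({0, Pstar d} : Finset (Fin d → F2)).card = 2 := by
    rw [Finset.card_insert_of_notMem (by simpa using (Pstar_ne_zero d hd1).symm)]
    simp
  rw [h1, h2]

def SetI (n d : ℕ) : Finset (Fin n) := Finset.univ.filter (fun i : Fin n => d ≤ i.val)

lemma card_SetI (hdn : d ≤ n) : (SetI n d).card + d ≤ n := by
  have h1 : d ≤ (Finset.univ.filter (fun i : Fin n => ¬ d ≤ i.val)).card := by
    have := Finset.card_le_card_of_injOn (s := (Finset.univ : Finset (Fin d)))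
      (t := Finset.univ.filter (fun i : Fin n => ¬ d ≤ i.val)) (Fin.castLE hdn)
      (fun a _ => by simpa using a.isLt)
      (fun a _ b _ h => Fin.castLE_inj.mp h)
    simpa using this
  have h2 := Finset.card_filter_add_card_filter_not
      (s := (Finset.univ : Finset (Fin n))) (fun i : Fin n => d ≤ i.val)
  rw [Finset.card_univ, Fintype.card_fin] at h2
  rw [SetI]
  omega

def Cov (k : ℕ) (hdn : d ≤ n) : Multiset (AffineSubspace F2 (Fin n → F2)) :=
  Multiset.replicate (k - 2) (Fib n d hdn 0)
  + Multiset.replicate (k - 1) (Fib n d hdn (Pstar d))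
  + k • ((SetA d).val.map (Fib n d hdn))
  + (SetI n d).val.map (G n d hdn)
  + {Gsum n d hdn}

lemma card_Cov (k : ℕ) (hdn : d ≤ n) :
    Multiset.card (Cov n d k hdn)
      = (k - 2) + (k - 1) + k * (SetA d).card + (SetI n d).card + 1 := by
  simp [Cov]

lemma covCount_Cov (k : ℕ) (hdn : d ≤ n) (x : Fin n → F2) :
    covCount n (Cov n d k hdn) x
      = (if x ∈ Fib n d hdn 0 then k - 2 else 0)
      + (if x ∈ Fib n d hdn (Pstar d) then k - 1 else 0)
      + k * Multiset.countP (fun p => x ∈ Fib n d hdn p) (SetA d).val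
      + Multiset.countP (fun i => x ∈ G n d hdn i) (SetI n d).val
      + (if x ∈ Gsum n d hdn then 1 else 0) := by
  rw [covCount, Cov]
  rw [Multiset.countP_add, Multiset.countP_add, Multiset.countP_add, Multiset.countP_add,
    countP_replicate', countP_replicate', Multiset.countP_nsmul, Multiset.countP_map,
    Multiset.countP_map, ← Multiset.countP_eq_card_filter, ← Multiset.countP_eq_card_filter]
  congr 1
  rw [show ({Gsum n d hdn} : Multiset (AffineSubspace F2 (Fin n → F2))) = Gsum n d hdn ::ₘ 0 from rfl,
    Multiset.countP_cons, Multiset.countP_zero]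
  simp

end Stmt6Aux
end Aux

theorem stmt6 (n k d : ℕ) (hk : 2 ≤ k) (hd : 1 ≤ d) (hdn : d ≤ n) :
    f n k d ≤ n + 2 ^ d * k - d - 2 := by
  classical
  have hdn1 : d - 1 < n := by omega
  have hF2a : ∀ a : F2, a ≠ 1 → a = 0 := by decide
  have hF2b : ∀ a : F2, a ≠ 0 → a = 1 := by decide
  have hmemF : ∀ (p : Fin d → F2) (x : Fin n → F2),
      x ∈ Stmt6Aux.Fib n d hdn p ↔ (fun j => x (Fin.castLE hdn j)) = p := by
    intro p x
    rw [Stmt6Aux.mem_Fib]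
    exact ⟨fun h => funext h, fun h j => congrFun h j⟩
  have hstar1 : Stmt6Aux.Pstar d ⟨d - 1, by omega⟩ = 1 := by
    rw [Stmt6Aux.Pstar]; simp
  have hstar0 : ∀ j : Fin d, (j : ℕ) < d - 1 → Stmt6Aux.Pstar d j = 0 := by
    intro j hj
    rw [Stmt6Aux.Pstar]
    simp only [ite_eq_right_iff]
    intro h; omega
  have hcastd : Fin.castLE hdn (⟨d - 1, by omega⟩ : Fin d) = (⟨d - 1, hdn1⟩ : Fin n) := rfl
  have hcov : IsCover n k d (Stmt6Aux.Cov n d k hdn) := by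
    refine ⟨?_, ?_, ?_⟩
    · -- dimensions and nonemptiness
      intro S hS
      rw [Stmt6Aux.Cov] at hS
      simp only [Multiset.mem_add, Multiset.mem_replicate, Multiset.mem_map,
        Multiset.mem_singleton] at hS
      rcases hS with ((((⟨-, rfl⟩ | ⟨-, rfl⟩) | hS) | ⟨i, hi, rfl⟩) | rfl)
      · exact ⟨Stmt6Aux.nonempty_Fib n d hdn _, Stmt6Aux.dims_Fib n d hdn _⟩
      · exact ⟨Stmt6Aux.nonempty_Fib n d hdn _, Stmt6Aux.dims_Fib n d hdn _⟩
      · rw [Multiset.mem_nsmul] at hS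
        obtain ⟨p, hp, rfl⟩ := Multiset.mem_map.mp hS.2
        exact ⟨Stmt6Aux.nonempty_Fib n d hdn _, Stmt6Aux.dims_Fib n d hdn _⟩
      · have hi' : d ≤ i.val := by
          rw [Finset.mem_val, Stmt6Aux.SetI, Finset.mem_filter] at hi
          exact hi.2
        exact ⟨Stmt6Aux.nonempty_G n d hdn i, Stmt6Aux.dims_G n d hdn i hi'⟩
      · exact ⟨Stmt6Aux.nonempty_Gsum n d hdn, Stmt6Aux.dims_Gsum n d hd hdn⟩
    · -- every nonzero point covered at least k times
      intro x hx
      rw [Stmt6Aux.covCount_Cov]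
      set c4 := Multiset.countP (fun i => x ∈ Stmt6Aux.G n d hdn i) (Stmt6Aux.SetI n d).val
        with hc4
      set m3 := k * Multiset.countP (fun p => x ∈ Stmt6Aux.Fib n d hdn p) (Stmt6Aux.SetA d).val
        with hm3
      by_cases h0 : (fun j => x (Fin.castLE hdn j)) = 0
      · -- (c) prefix of x is zero
        have hpre : ∀ j : Fin d, x (Fin.castLE hdn j) = 0 := fun j => congrFun h0 j
        set T := (Stmt6Aux.SetI n d).filter (fun i => x i = 1) with hT
        have hTmem : ∀ i ∈ T, d ≤ i.val ∧ x i = 1 := by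
          intro i hi
          rw [hT, Finset.mem_filter, Stmt6Aux.SetI, Finset.mem_filter] at hi
          exact ⟨hi.1.2, hi.2⟩
        have hc4ge : T.card ≤ c4 := by
          have hsub : T ⊆ (Stmt6Aux.SetI n d).filter (fun i => x ∈ Stmt6Aux.G n d hdn i) := by
            intro i hi
            obtain ⟨hi1, hi2⟩ := hTmem i hi
            rw [Finset.mem_filter]
            refine ⟨Finset.mem_of_mem_filter i hi, ?_⟩
            rw [Stmt6Aux.mem_G n d hd hdn i hi1]
            exact ⟨fun j hj => hpre j, hi2⟩
          calc T.card ≤ ((Stmt6Aux.SetI n d).filter (fun i => x ∈ Stmt6Aux.G n d hdn i)).card :=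
                Finset.card_le_card hsub
            _ = c4 := by
                rw [hc4, Multiset.countP_eq_card_filter, ← Finset.filter_val]
                rfl
        have hTne : T.Nonempty := by
          by_contra hne
          apply hx
          funext i
          by_cases hi : i.val < d
          · have hcast : Fin.castLE hdn ⟨i.val, hi⟩ = i := rfl
            rw [← hcast]
            exact hpre _
          · by_contra hxi
            exact hne ⟨i, by
              rw [hT, Finset.mem_filter, Stmt6Aux.SetI, Finset.mem_filter]
              exact ⟨⟨Finset.mem_univ i, by omega⟩, hF2b _ hxi⟩⟩
        have h1T : 1 ≤ T.card := Finset.card_pos.mpr hTne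
        rw [if_pos ((hmemF 0 x).mpr h0)]
        rcases Nat.lt_or_ge T.card 2 with hT1 | hT2
        · -- exactly one high coordinate: the Gsum subspace also covers x
          have hTcard : T.card = 1 := by omega
          have hGsum : x ∈ Stmt6Aux.Gsum n d hdn := by
            rw [Stmt6Aux.mem_Gsum n d hd hdn]
            refine ⟨fun j hj => hpre j, ?_⟩
            have hsum : (∑ i ∈ Finset.univ.filter (fun i : Fin n => d - 1 ≤ i.val), x i)
                = (((Finset.univ.filter (fun i : Fin n => d - 1 ≤ i.val)).filter
                    (fun i => x i = 1)).card : F2) := by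
              rw [← Finset.sum_boole]
              refine Finset.sum_congr rfl fun i _ => ?_
              rcases (show ∀ a : F2, a = 0 ∨ a = 1 by decide) (x i) with h | h <;> simp [h]
            have hfilter : ((Finset.univ.filter (fun i : Fin n => d - 1 ≤ i.val)).filter
                (fun i => x i = 1)) = T := by
              ext i
              rw [hT, Finset.mem_filter, Finset.mem_filter, Stmt6Aux.SetI,
                Finset.mem_filter, Finset.mem_filter]
              constructor
              · rintro ⟨⟨hu, h1⟩, h2⟩
                refine ⟨⟨hu, ?_⟩, h2⟩
                rcases Nat.lt_or_ge i.val d with hlt | hge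
                · exfalso
                  have hieq : i = Fin.castLE hdn ⟨i.val, hlt⟩ := rfl
                  rw [hieq] at h2
                  rw [hpre ⟨i.val, hlt⟩] at h2
                  exact (show (0 : F2) ≠ 1 by decide) h2
                · exact hge
              · rintro ⟨⟨hu, h1⟩, h2⟩
                exact ⟨⟨hu, by omega⟩, h2⟩
            rw [hsum, hfilter, hTcard]
            simp
          rw [if_pos hGsum]
          omega
        · -- at least two high coordinates
          omega
      · by_cases hst : (fun j => x (Fin.castLE hdn j)) = Stmt6Aux.Pstar d
        · -- (b) prefix of x is Pstar
          rw [if_pos ((hmemF _ x).mpr hst)]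
          have hpre : ∀ j : Fin d, (j : ℕ) < d - 1 → x (Fin.castLE hdn j) = 0 := by
            intro j hj
            rw [congrFun hst j]
            exact hstar0 j hj
          by_cases hex : ∃ i : Fin n, d ≤ i.val ∧ x i = 1
          · obtain ⟨i, hi1, hi2⟩ := hex
            have hc4pos : 0 < c4 := by
              rw [hc4, Multiset.countP_pos]
              refine ⟨i, ?_, ?_⟩
              · rw [Finset.mem_val, Stmt6Aux.SetI, Finset.mem_filter]
                exact ⟨Finset.mem_univ i, hi1⟩
              · rw [Stmt6Aux.mem_G n d hd hdn i hi1]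
                exact ⟨hpre, hi2⟩
            omega
          · have hGsum : x ∈ Stmt6Aux.Gsum n d hdn := by
              rw [Stmt6Aux.mem_Gsum n d hd hdn]
              refine ⟨hpre, ?_⟩
              rw [Finset.sum_eq_single_of_mem (⟨d - 1, hdn1⟩ : Fin n)
                (by rw [Finset.mem_filter]; exact ⟨Finset.mem_univ _, by simp⟩)
                ?_]
              · rw [← hcastd, congrFun hst ⟨d - 1, by omega⟩]
                exact hstar1
              · intro b hb hbne
                rw [Finset.mem_filter] at hb
                have hbv : d ≤ b.val := by
                  rcases Nat.lt_or_ge b.val d with h | h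
                  · exfalso
                    have : b.val = d - 1 := by omega
                    exact hbne (Fin.ext this)
                  · exact h
                push_neg at hex
                exact hF2a _ (hex b hbv)
            rw [if_pos hGsum]
            omega
        · -- (a) the prefix is a generic fiber
          have hpx : (fun j => x (Fin.castLE hdn j)) ∈ (Stmt6Aux.SetA d) := by
            rw [Stmt6Aux.SetA, Finset.mem_compl]
            intro hmem
            rcases Finset.mem_insert.mp hmem with h | h
            · exact h0 h
            · exact hst (Finset.mem_singleton.mp h)
          have hm3ge : k ≤ m3 := by
            rw [hm3]
            refine Nat.le_mul_of_pos_right k ?_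
            rw [Multiset.countP_pos]
            exact ⟨_, Finset.mem_val.mpr hpx, (hmemF _ x).mpr rfl⟩
          omega
    · -- the origin is covered exactly k - 2 times
      rw [Stmt6Aux.covCount_Cov]
      have e1 : (0 : Fin n → F2) ∈ Stmt6Aux.Fib n d hdn 0 := by
        rw [hmemF]
        rfl
      have e2 : ¬ ((0 : Fin n → F2) ∈ Stmt6Aux.Fib n d hdn (Stmt6Aux.Pstar d)) := by
        rw [hmemF]
        intro h
        have := congrFun h ⟨d - 1, by omega⟩
        rw [hstar1] at this
        exact (show (0 : F2) ≠ 1 by decide) this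
      have e3 : Multiset.countP (fun p => (0 : Fin n → F2) ∈ Stmt6Aux.Fib n d hdn p)
          (Stmt6Aux.SetA d).val = 0 := by
        rw [Multiset.countP_eq_zero]
        intro p hp hmem
        rw [hmemF] at hmem
        rw [Finset.mem_val, Stmt6Aux.SetA, Finset.mem_compl] at hp
        exact hp (by rw [← hmem]; exact Finset.mem_insert_self _ _)
      have e4 : Multiset.countP (fun i => (0 : Fin n → F2) ∈ Stmt6Aux.G n d hdn i)
          (Stmt6Aux.SetI n d).val = 0 := by
        rw [Multiset.countP_eq_zero]
        intro i hi hmem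
        rw [Finset.mem_val, Stmt6Aux.SetI, Finset.mem_filter] at hi
        rw [Stmt6Aux.mem_G n d hd hdn i hi.2] at hmem
        exact (show (0 : F2) ≠ 1 by decide) hmem.2
      have e5 : ¬ ((0 : Fin n → F2) ∈ Stmt6Aux.Gsum n d hdn) := by
        rw [Stmt6Aux.mem_Gsum n d hd hdn]
        intro h
        have := h.2
        simp at this
      rw [if_pos e1, if_neg e2, e3, e4, if_neg e5]
      omega
  have hle : f n k d ≤ Multiset.card (Stmt6Aux.Cov n d k hdn) :=
    Nat.sInf_le ⟨Stmt6Aux.Cov n d k hdn, hcov, rfl⟩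
  have hcard := Stmt6Aux.card_Cov n d k hdn
  rw [Stmt6Aux.card_SetA d hd] at hcard
  have hI := Stmt6Aux.card_SetI n d hdn
  have hP : 2 ≤ 2 ^ d := by
    calc 2 = 2 ^ 1 := by norm_num
      _ ≤ 2 ^ d := Nat.pow_le_pow_right (by norm_num) hd
  obtain ⟨c, hc⟩ := Nat.le.dest hP
  have hc2 : 2 ^ d - 2 = c := by omega
  have hc3 : 2 ^ d * k = 2 * k + c * k := by rw [← hc]; ring
  rw [hc2] at hcard
  have hkc : k * c = c * k := Nat.mul_comm _ _
  rw [hkc] at hcard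
  have hck : c * k + 0 = c * k := rfl
  -- linearize: treat c * k as an atom
  set ck := c * k with hckdef
  omega
end

section
/- Let n ≥ 1, m ≥ 1 and k ≥ 1 be integers. There exists a (k,1;0)-cover of 𝔽₂ⁿ of cardinality m if and only if there exists a linear map φ : 𝔽₂ⁿ → 𝔽₂ᵐ such that for every nonzero x ∈ 𝔽₂ⁿ the Hamming weight of φ(x) (the number of nonzero coordinates of φ(x)) is at least k. -/
open scoped Classical

noncomputable section AuxStmt9

open Module

lemma F2_ne_zero_iff (a : F2) : a ≠ 0 ↔ a = 1 := by
  revert a; decide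

/-- the affine hyperplane {x | g x = 1} -/
def hypOf (n : ℕ) (g : (Fin n → F2) →ₗ[F2] F2) : AffineSubspace F2 (Fin n → F2) where
  carrier := {x | g x = 1}
  smul_vsub_vadd_mem' := by
    intro c p1 p2 p3 h1 h2 h3
    simp only [Set.mem_setOf_eq] at *
    simp [vsub_eq_sub, vadd_eq_add, map_add, map_sub, map_smul, h1, h2, h3]

lemma mem_hypOf {n : ℕ} {g : (Fin n → F2) →ₗ[F2] F2} {x : Fin n → F2} :
    x ∈ hypOf n g ↔ g x = 1 := Iff.rfl

lemma hypOf_props {n : ℕ} (hn : 1 ≤ n) (g : (Fin n → F2) →ₗ[F2] F2) (hg : g ≠ 0) :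
    ((hypOf n g : Set (Fin n → F2)).Nonempty) ∧
    Module.finrank F2 (hypOf n g).direction = n - 1 := by
  obtain ⟨x₀, hx₀⟩ : ∃ x, g x ≠ 0 := by
    by_contra h
    push_neg at h
    exact hg (LinearMap.ext fun x => h x)
  have hx1 : g x₀ = 1 := (F2_ne_zero_iff _).mp hx₀
  have hne : (hypOf n g : Set (Fin n → F2)).Nonempty := ⟨x₀, hx1⟩
  refine ⟨hne, ?_⟩
  have hdir : (hypOf n g).direction = LinearMap.ker g := by
    ext v
    rw [AffineSubspace.mem_direction_iff_eq_vsub hne]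
    constructor
    · rintro ⟨p1, hp1, p2, hp2, rfl⟩
      have h1 : g p1 = 1 := hp1
      have h2 : g p2 = 1 := hp2
      simp [LinearMap.mem_ker, vsub_eq_sub, map_sub, h1, h2]
    · intro hv
      refine ⟨v + x₀, ?_, x₀, hx1, by simp [vsub_eq_sub]⟩
      show g (v + x₀) = 1
      rw [map_add, LinearMap.mem_ker.mp hv, zero_add, hx1]
  rw [hdir]
  have hsurj : Function.Surjective g := by
    intro a
    fin_cases a
    · exact ⟨0, map_zero g⟩
    · exact ⟨x₀, hx1⟩
  have hrange : LinearMap.range g = ⊤ := LinearMap.range_eq_top.mpr hsurj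
  have hrn := LinearMap.finrank_range_add_finrank_ker g
  rw [hrange, finrank_top, Module.finrank_self, Module.finrank_fin_fun] at hrn
  omega

lemma exists_functional_of_hyperplane {n : ℕ} (hn : 1 ≤ n)
    (S : AffineSubspace F2 (Fin n → F2)) (hne : (S : Set (Fin n → F2)).Nonempty)
    (hdim : Module.finrank F2 S.direction = n - 1) (h0 : (0 : Fin n → F2) ∉ S) :
    ∃ g : (Fin n → F2) →ₗ[F2] F2, ∀ x, x ∈ S ↔ g x = 1 := by
  obtain ⟨p, hp⟩ := hne
  set W := S.direction with hW
  -- finrank of quotient is 1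
  have hfin : Module.finrank F2 ((Fin n → F2) ⧸ W) = 1 := by
    have := Submodule.finrank_quotient_add_finrank W
    rw [hdim, Module.finrank_fin_fun] at this
    omega
  have := FiniteDimensional.nonempty_linearEquiv_of_finrank_eq
    (by rw [hfin, Module.finrank_self] : Module.finrank F2 ((Fin n → F2) ⧸ W) = Module.finrank F2 F2)
  obtain ⟨e⟩ := this
  set g : (Fin n → F2) →ₗ[F2] F2 := e.toLinearMap.comp W.mkQ with hg
  have hker : LinearMap.ker g = W := by
    rw [hg, LinearMap.ker_comp, LinearEquiv.ker, Submodule.comap_bot, Submodule.ker_mkQ]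
  have hpW : p ∉ W := by
    intro hmem
    apply h0
    have : (0 : Fin n → F2) -ᵥ p ∈ S.direction := by
      simpa [vsub_eq_sub] using W.neg_mem hmem
    exact (AffineSubspace.vsub_right_mem_direction_iff_mem hp 0).mp this
  have hgp : g p = 1 := by
    have : g p ≠ 0 := fun h => hpW (hker ▸ LinearMap.mem_ker.mpr h)
    exact (F2_ne_zero_iff _).mp this
  refine ⟨g, fun x => ?_⟩
  rw [← AffineSubspace.vsub_right_mem_direction_iff_mem hp x, ← hW, ← hker,
    LinearMap.mem_ker, vsub_eq_sub, map_sub, hgp, sub_eq_zero]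

lemma covCount_map {n m : ℕ} (v : Fin m → AffineSubspace F2 (Fin n → F2)) (x : Fin n → F2) :
    covCount n (Multiset.map v Finset.univ.val) x
      = (Finset.univ.filter (fun i => x ∈ v i)).card := by
  classical
  rw [covCount, Multiset.countP_map]
  rfl

end AuxStmt9

theorem stmt9 (n m k : ℕ) (hn : 1 ≤ n) (hm : 1 ≤ m) (hk : 1 ≤ k) :
    (∃ H, IsCoverExact n k 1 0 H ∧ Multiset.card H = m) ↔
    (∃ φ : (Fin n → F2) →ₗ[F2] (Fin m → F2), ∀ x : Fin n → F2, x ≠ 0 →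
      k ≤ (Finset.univ.filter (fun i => φ x i ≠ 0)).card) := by
  constructor
  · rintro ⟨H, ⟨hsub, hcov, h0⟩, hcard⟩
    -- enumerate H
    have h0' : ∀ S ∈ H, (0 : Fin n → F2) ∉ S := by
      intro S hS hmem
      have : 0 < covCount n H 0 := by
        rw [covCount, Multiset.countP_pos]
        exact ⟨S, hS, hmem⟩
      omega
    -- list enumeration
    set l := H.toList with hl
    have hlen : l.length = m := by rw [hl, Multiset.length_toList, hcard]
    have hHl : (l : Multiset _) = H := Multiset.coe_toList H
    set v : Fin m → AffineSubspace F2 (Fin n → F2) := fun i => l.get (Fin.cast hlen.symm i) with hv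
    have hmap : Multiset.map v Finset.univ.val = H := by
      rw [← hHl]
      have : l = List.ofFn (fun i : Fin l.length => l.get i) := (List.ofFn_get l).symm
      conv_rhs => rw [this]
      rw [List.ofFn_eq_map]
      rw [Fin.univ_def]
      show Multiset.map v (List.finRange m : Multiset (Fin m)) = _
      rw [Multiset.map_coe]
      congr 1
      have : List.finRange l.length = (List.finRange m).map (Fin.cast hlen.symm) := by
        subst hlen; simp [List.map_id']
      rw [this, List.map_map]
      rfl
    -- choose functionals
    have hfun : ∀ i : Fin m, ∃ g : (Fin n → F2) →ₗ[F2] F2, ∀ x, x ∈ v i ↔ g x = 1 := by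
      intro i
      have hvi : v i ∈ H := by
        rw [← hmap]
        exact Multiset.mem_map.mpr ⟨i, by simp, rfl⟩
      obtain ⟨hne, hdim⟩ := hsub _ hvi
      exact exists_functional_of_hyperplane hn _ hne hdim (h0' _ hvi)
    choose g hg using hfun
    refine ⟨LinearMap.pi g, fun x hx => ?_⟩
    have := hcov x hx
    rw [← hmap, covCount_map] at this
    refine le_trans this (le_of_eq ?_)
    congr 1
    ext i
    simp only [Finset.mem_filter, Finset.mem_univ, true_and, LinearMap.pi_apply]
    rw [hg i x]; simp [Finset.mem_filter, F2_ne_zero_iff]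
  · rintro ⟨φ, hφ⟩
    have hproj_ne : (LinearMap.proj ⟨0, hn⟩ : (Fin n → F2) →ₗ[F2] F2) ≠ 0 := by
      intro h
      have := LinearMap.congr_fun h (Pi.single ⟨0, hn⟩ 1)
      simp at this
    have hex : ∀ i : Fin m, ∃ h : (Fin n → F2) →ₗ[F2] F2, h ≠ 0 ∧
        ∀ x : Fin n → F2, φ x i ≠ 0 → h x = 1 := by
      intro i
      by_cases hi : ((LinearMap.proj i).comp φ : (Fin n → F2) →ₗ[F2] F2) = 0
      · refine ⟨LinearMap.proj ⟨0, hn⟩, hproj_ne, fun x hx => absurd ?_ hx⟩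
        simpa using LinearMap.congr_fun hi x
      · refine ⟨(LinearMap.proj i).comp φ, hi, fun x hx => ?_⟩
        have : ((LinearMap.proj i).comp φ) x ≠ 0 := by simpa using hx
        exact (F2_ne_zero_iff _).mp this
    choose g' hg'ne hg'one using hex
    have hcc : ∀ x, covCount n (Multiset.map (fun i => hypOf n (g' i)) Finset.univ.val) x
        = (Finset.univ.filter (fun i => g' i x = 1)).card := by
      intro x
      rw [covCount_map]
      congr 1
      exact Finset.filter_congr (fun i _ => by rw [mem_hypOf])
    refine ⟨Multiset.map (fun i => hypOf n (g' i)) Finset.univ.val, ⟨?_, ?_, ?_⟩, ?_⟩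
    · intro S hS
      obtain ⟨i, _, rfl⟩ := Multiset.mem_map.mp hS
      exact hypOf_props hn _ (hg'ne i)
    · intro x hx
      have hk' := hφ x hx
      rw [hcc]
      refine le_trans hk' (Finset.card_le_card ?_)
      intro i hi
      simp only [Finset.mem_filter, Finset.mem_univ, true_and] at hi ⊢
      exact hg'one i x hi
    · rw [hcc]
      convert Finset.card_empty
      ext i
      simp only [Finset.mem_filter, Finset.mem_univ, true_and, Finset.notMem_empty, iff_false]
      rw [map_zero]
      decide
    · rw [Multiset.card_map]
      simp
end

section
/- Let k ≥ 2 and n ≥ 1 be integers. Then g(n,k,1;0) ≥ n + ⌊(k−1)/2⌋ · log₂(2n/(k−1)), where the inequality is between real numbers and log₂ denotes the base-2 logarithm. -/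
open scoped Classical

open Finset in
lemma f2_ne_zero_iff : ∀ b : F2, b ≠ 0 ↔ b = 1 := by decide

lemma pow_div_le_choose {m t : ℕ} (ht : 1 ≤ t) (h : t ≤ m) :
    ((m : ℝ) / t) ^ t ≤ (m.choose t : ℝ) := by
  have htR : (0:ℝ) < t := by exact_mod_cast ht
  have hfact : (0:ℝ) < (t.factorial : ℝ) := by exact_mod_cast t.factorial_pos
  have hdesc : (m.descFactorial t : ℝ) = (m.choose t : ℝ) * (t.factorial : ℝ) := by
    rw [Nat.descFactorial_eq_factorial_mul_choose]; push_cast; ring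
  have hfacteq : (t.factorial : ℝ) = ∏ i ∈ Finset.range t, ((t : ℝ) - i) := by
    have h1 : t.factorial = t.descFactorial t := (Nat.descFactorial_self t).symm
    rw [h1, Nat.descFactorial_eq_prod_range]
    push_cast
    refine Finset.prod_congr rfl fun i hi => ?_
    rw [Nat.cast_sub (le_of_lt (Finset.mem_range.mp hi))]
  have hdesceq : (m.descFactorial t : ℝ) = ∏ i ∈ Finset.range t, ((m : ℝ) - i) := by
    rw [Nat.descFactorial_eq_prod_range]
    push_cast
    refine Finset.prod_congr rfl fun i hi => ?_
    rw [Nat.cast_sub (le_trans (le_of_lt (Finset.mem_range.mp hi)) h)]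
  have key : ((m:ℝ)/t)^t * (t.factorial : ℝ) ≤ (m.descFactorial t : ℝ) := by
    have hp : ((m:ℝ)/t)^t = ∏ _i ∈ Finset.range t, ((m:ℝ)/t) := by
      rw [Finset.prod_const, Finset.card_range]
    rw [hdesceq, hfacteq, hp, ← Finset.prod_mul_distrib]
    refine Finset.prod_le_prod ?_ ?_
    · intro i hi
      have h2 : (i:ℝ) < t := by exact_mod_cast Finset.mem_range.mp hi
      have h3 : (0:ℝ) ≤ (t:ℝ) - i := by linarith
      positivity
    · intro i hi
      have h2 : (0:ℝ) ≤ i := by positivity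
      have h4 : (i:ℝ) * t ≤ i * m := by
        have : (t:ℝ) ≤ m := by exact_mod_cast h
        nlinarith
      rw [div_mul_eq_mul_div, div_le_iff₀ htR]
      nlinarith
  rw [hdesc] at key
  exact le_of_mul_le_mul_right key hfact

lemma hyperplane_functional {n : ℕ} (hn : 1 ≤ n) (S : AffineSubspace F2 (Fin n → F2))
    (hne : (S : Set (Fin n → F2)).Nonempty) (hd : Module.finrank F2 S.direction = n - 1)
    (h0 : (0 : Fin n → F2) ∉ S) :
    ∃ f : (Fin n → F2) →ₗ[F2] F2, ∀ x, x ∈ S ↔ f x = 1 := by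
  obtain ⟨p, hp⟩ := hne
  set D := S.direction with hD
  have hV : Module.finrank F2 (Fin n → F2) = n := by simp
  have hQ : Module.finrank F2 ((Fin n → F2) ⧸ D) = 1 := by
    have := D.finrank_quotient_add_finrank
    rw [hV, hd] at this
    omega
  have e : ((Fin n → F2) ⧸ D) ≃ₗ[F2] F2 :=
    LinearEquiv.ofFinrankEq _ _ (by rw [hQ, Module.finrank_self])
  set f : (Fin n → F2) →ₗ[F2] F2 := e.toLinearMap ∘ₗ D.mkQ with hf
  have hker : LinearMap.ker f = D := by
    rw [hf, LinearMap.ker_comp, LinearEquiv.ker, Submodule.comap_bot, Submodule.ker_mkQ]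
  have hmemD : ∀ x, x ∈ D ↔ f x = 0 := by
    intro x
    rw [← hker, LinearMap.mem_ker]
  have hpD : p ∉ D := by
    intro hpd
    apply h0
    have : (0 : Fin n → F2) -ᵥ p ∈ D := by
      simpa [vsub_eq_sub] using D.neg_mem hpd
    exact (AffineSubspace.vsub_right_mem_direction_iff_mem hp _).mp this
  have hfp : f p = 1 := by
    have h1 : f p ≠ 0 := fun h => hpD ((hmemD p).mpr h)
    revert h1; generalize f p = b; revert b; decide
  refine ⟨f, fun x => ?_⟩
  rw [← AffineSubspace.vsub_right_mem_direction_iff_mem hp x, ← hD, hmemD, vsub_eq_sub,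
    map_sub, hfp, sub_eq_zero]

open Finset in
lemma code_bound {n m k : ℕ} (hk : 2 ≤ k) (hn : 1 ≤ n)
    (a : Fin m → ((Fin n → F2) →ₗ[F2] F2))
    (hcov : ∀ x : Fin n → F2, x ≠ 0 → k ≤ (Finset.univ.filter (fun i => a i x = 1)).card) :
    (n : ℝ) + (((k-1)/2 : ℕ) : ℝ) * Real.logb 2 (2*(n:ℝ)/((k:ℝ)-1)) ≤ (m : ℝ) := by
  set t : ℕ := (k-1)/2 with htdef
  have h2t : 2 * t ≤ k - 1 := by omega
  set wt : (Fin m → F2) → ℕ := fun e => (Finset.univ.filter (fun i => e i ≠ 0)).card with hwtdef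
  set Φ : (Fin n → F2) → (Fin m → F2) := fun x i => a i x with hΦdef
  have hwt : ∀ x : Fin n → F2, x ≠ 0 → k ≤ wt (Φ x) := by
    intro x hx
    refine le_trans (hcov x hx) (le_of_eq ?_)
    congr 1
    exact Finset.filter_congr (fun i _ => by rw [hΦdef, f2_ne_zero_iff _])
  have hwt_sub : ∀ u v : Fin m → F2, wt (u - v) ≤ wt u + wt v := by
    intro u v
    rw [hwtdef]
    refine le_trans (Finset.card_le_card ?_) (Finset.card_union_le _ _)
    intro i hi
    simp only [Finset.mem_filter, Finset.mem_union, Finset.mem_univ, true_and] at hi ⊢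
    by_contra hcon
    push_neg at hcon
    apply hi
    simp [Pi.sub_apply, hcon.1, hcon.2]
  set B : Finset (Fin m → F2) := Finset.univ.filter (fun e => wt e ≤ t) with hBdef
  -- Hamming bound
  have count1 : 2^n * B.card ≤ 2^m := by
    set sProd : Finset ((Fin n → F2) × (Fin m → F2)) := Finset.univ ×ˢ B with hsProd
    have hinj : Set.InjOn (fun p : (Fin n → F2) × (Fin m → F2) => Φ p.1 + p.2)
        (↑sProd : Set ((Fin n → F2) × (Fin m → F2))) := by
      rintro ⟨x, e⟩ hx ⟨y, e'⟩ hy hxy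
      simp only [hsProd, Finset.mem_coe, Finset.mem_product, hBdef,
        Finset.mem_filter, Finset.mem_univ, true_and] at hx hy
      simp only at hxy
      have hsub : Φ (x - y) = e' - e := by
        have : ∀ z, Φ z = fun i => a i z := fun z => rfl
        funext i
        have := congrFun hxy i
        simp only [Pi.add_apply, hΦdef] at this ⊢
        simp only [map_sub, Pi.sub_apply]
        linear_combination this
      have hxyeq : x = y := by
        by_contra hne
        have h1 : k ≤ wt (Φ (x - y)) := hwt _ (sub_ne_zero.mpr hne)
        have h2 : wt (e' - e) ≤ 2 * t := le_trans (hwt_sub e' e) (by omega)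
        rw [hsub] at h1
        omega
      subst hxyeq
      have : e = e' := by
        funext i
        have := congrFun hxy i
        simpa using this
      simp [this]
    have hmaps : ∀ p ∈ sProd,
        (fun p : (Fin n → F2) × (Fin m → F2) => Φ p.1 + p.2) p ∈ (Finset.univ : Finset (Fin m → F2)) :=
      fun p _ => Finset.mem_univ _
    have := Finset.card_le_card_of_injOn _ hmaps hinj
    rw [Finset.card_product, Finset.card_univ] at this
    simpa using this
  -- binomial count
  have count2 : m.choose t ≤ B.card := by
    set sPow : Finset (Finset (Fin m)) := Finset.univ.powersetCard t with hsPow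
    have hinj : Set.InjOn (fun T : Finset (Fin m) => (fun i => if i ∈ T then (1:F2) else 0))
        (↑sPow : Set (Finset (Fin m))) := by
      intro T hT T' hT' hTT'
      ext i
      have := congrFun hTT' i
      by_cases h1 : i ∈ T <;> by_cases h2 : i ∈ T' <;> simp_all
    have hmaps : ∀ T ∈ sPow,
        (fun i => if i ∈ T then (1:F2) else 0) ∈ B := by
      intro T hT
      rw [hsPow, Finset.mem_powersetCard] at hT
      rw [hBdef, Finset.mem_filter]
      refine ⟨Finset.mem_univ _, ?_⟩
      have : (Finset.univ.filter (fun i => (if i ∈ T then (1:F2) else 0) ≠ 0)) = T := by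
        ext i; by_cases h : i ∈ T <;> simp [h]
      rw [hwtdef]
      simp only [this]
      omega
    have := Finset.card_le_card_of_injOn _ hmaps hinj
    rwa [Finset.card_powersetCard, Finset.card_univ, Fintype.card_fin] at this
  -- n ≤ m
  have hB0 : 1 ≤ B.card := by
    refine Finset.card_pos.mpr ⟨0, ?_⟩
    rw [hBdef, Finset.mem_filter]
    refine ⟨Finset.mem_univ _, ?_⟩
    rw [hwtdef]
    simp
  have hnm : n ≤ m := by
    have h1 : 2^n ≤ 2^m := le_trans (Nat.le_mul_of_pos_right _ hB0) count1
    exact (Nat.pow_le_pow_iff_right (by norm_num)).mp h1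
  have hkm : k ≤ m := by
    have hx0 : (fun _ => (1:F2)) ≠ (0 : Fin n → F2) := by
      intro h
      have := congrFun h ⟨0, hn⟩
      simp at this
    refine le_trans (hcov _ hx0) ?_
    refine le_trans (Finset.card_le_card (Finset.filter_subset _ _)) ?_
    simp
  have htm : t ≤ m := by omega
  rcases Nat.eq_zero_or_pos t with ht0 | ht1
  · rw [ht0]
    simp only [Nat.cast_zero, zero_mul, add_zero]
    exact_mod_cast hnm
  -- real arithmetic
  have hkR : (1:ℝ) ≤ (k:ℝ) - 1 := by
    have : (2:ℝ) ≤ k := by exact_mod_cast hk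
    linarith
  have hnR : (1:ℝ) ≤ (n:ℝ) := by exact_mod_cast hn
  have htR : (0:ℝ) < t := by exact_mod_cast ht1
  set R : ℝ := 2*(n:ℝ)/((k:ℝ)-1) with hRdef
  have hR : 0 < R := by rw [hRdef]; positivity
  have hRle : R ≤ (m:ℝ)/t := by
    rw [hRdef, div_le_div_iff₀ (by linarith) htR]
    have h1 : (2:ℝ) * t ≤ (k:ℝ) - 1 := by
      have : ((2*t : ℕ):ℝ) ≤ ((k-1 : ℕ):ℝ) := by exact_mod_cast h2t
      push_cast at this
      rw [Nat.cast_sub (by omega)] at this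
      push_cast at this
      linarith
    have h2 : (n:ℝ) ≤ m := by exact_mod_cast hnm
    nlinarith
  have hchain : (2:ℝ)^n * R^t ≤ (2:ℝ)^m := by
    have c1 : R^t ≤ ((m:ℝ)/t)^t := pow_le_pow_left₀ hR.le hRle t
    have c2 : ((m:ℝ)/t)^t ≤ (m.choose t : ℝ) := pow_div_le_choose ht1 htm
    have c3 : (m.choose t : ℝ) ≤ (B.card : ℝ) := by exact_mod_cast count2
    have c4 : (2:ℝ)^n * (B.card:ℝ) ≤ (2:ℝ)^m := by exact_mod_cast count1
    have c5 : (0:ℝ) < (2:ℝ)^n := by positivity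
    nlinarith
  have hlog := (Real.logb_le_logb (b := 2) (by norm_num) (by positivity) (by positivity)).mpr hchain
  have h22 : Real.logb 2 2 = 1 := Real.logb_self_eq_one (by norm_num)
  rw [Real.logb_mul (by positivity) (by positivity)] at hlog
  simp only [Real.logb_pow, h22, mul_one] at hlog
  exact hlog

lemma exists_cover (n k : ℕ) (hn : 1 ≤ n) (hk : 1 ≤ k) :
    ∃ H : Multiset (AffineSubspace F2 (Fin n → F2)), IsCoverExact n k 1 0 H := by
  set P : Fin n → AffineSubspace F2 (Fin n → F2) := fun i =>
    AffineSubspace.mk' (Pi.single i 1)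
      (LinearMap.ker (LinearMap.proj i : (Fin n → F2) →ₗ[F2] F2)) with hP
  have hmem : ∀ (i : Fin n) (x : Fin n → F2), x ∈ P i ↔ x i = 1 := by
    intro i x
    rw [hP]
    rw [AffineSubspace.mem_mk', LinearMap.mem_ker]
    simp [vsub_eq_sub, sub_eq_zero]
  have hk0 : k ≠ 0 := by omega
  refine ⟨k • Multiset.map P Finset.univ.val, ?_, ?_, ?_⟩
  · intro S hS
    rw [Multiset.mem_nsmul_of_ne_zero hk0, Multiset.mem_map] at hS
    obtain ⟨i, -, rfl⟩ := hS
    constructor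
    · exact ⟨Pi.single i 1, AffineSubspace.self_mem_mk' _ _⟩
    · rw [hP]
      rw [AffineSubspace.direction_mk']
      have hsurj : Function.Surjective (LinearMap.proj i : (Fin n → F2) →ₗ[F2] F2) := by
        intro c
        exact ⟨Pi.single i c, by simp⟩
      have hrn := LinearMap.finrank_range_add_finrank_ker
        (LinearMap.proj i : (Fin n → F2) →ₗ[F2] F2)
      rw [LinearMap.range_eq_top.mpr hsurj, finrank_top] at hrn
      have hV : Module.finrank F2 (Fin n → F2) = n := by simp
      have hF : Module.finrank F2 F2 = 1 := Module.finrank_self F2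
      omega
  · intro x hx
    rw [covCount, Multiset.countP_nsmul, Multiset.countP_map]
    obtain ⟨i, hi⟩ := Function.ne_iff.mp hx
    have hi1 : x i = 1 := by
      have h2 : x i ≠ 0 := by simpa using hi
      revert h2; generalize x i = b; revert b; decide
    have hmem' : i ∈ Multiset.filter (fun j => x ∈ P j) Finset.univ.val :=
      Multiset.mem_filter.mpr ⟨Finset.mem_univ i, (hmem i x).mpr hi1⟩
    have : 0 < Multiset.card (Multiset.filter (fun j => x ∈ P j) Finset.univ.val) :=
      Multiset.card_pos_iff_exists_mem.mpr ⟨i, hmem'⟩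
    exact Nat.le_mul_of_pos_right k this
  · rw [covCount, Multiset.countP_nsmul]
    have : Multiset.countP (fun S => (0 : Fin n → F2) ∈ S) (Multiset.map P Finset.univ.val) = 0 := by
      rw [Multiset.countP_eq_zero]
      intro S hS
      rw [Multiset.mem_map] at hS
      obtain ⟨i, -, rfl⟩ := hS
      rw [hmem]
      simp
    rw [this, Nat.mul_zero]


theorem stmt10 (n k : ℕ) (hk : 2 ≤ k) (hn : 1 ≤ n) :
    (n : ℝ) + (((k - 1) / 2 : ℕ) : ℝ) * Real.logb 2 (2 * (n : ℝ) / ((k : ℝ) - 1))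
      ≤ (g n k 1 0 : ℝ) := by
  have hset : {m | ∃ H, IsCoverExact n k 1 0 H ∧ Multiset.card H = m}.Nonempty := by
    obtain ⟨H, hH⟩ := exists_cover n k hn (by omega)
    exact ⟨Multiset.card H, H, hH, rfl⟩
  obtain ⟨H, hH, hcard⟩ := Nat.sInf_mem hset
  obtain ⟨hdim, hcov, h0⟩ := hH
  have h0' : ∀ S ∈ H, (0 : Fin n → F2) ∉ S := by
    rw [covCount] at h0
    exact Multiset.countP_eq_zero.mp h0
  set L := H.toList with hLdef
  have hLH : (L : Multiset (AffineSubspace F2 (Fin n → F2))) = H := Multiset.coe_toList H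
  have hmg : L.length = g n k 1 0 := by
    rw [hLdef, Multiset.length_toList, hcard]; rfl
  have hfun : ∀ i : Fin L.length, ∃ f : (Fin n → F2) →ₗ[F2] F2, ∀ x, x ∈ L.get i ↔ f x = 1 := by
    intro i
    have hSH : L.get i ∈ H := by
      rw [← hLH]; exact Multiset.mem_coe.mpr (L.get_mem _)
    exact hyperplane_functional hn _ (hdim _ hSH).1 (hdim _ hSH).2 (h0' _ hSH)
  choose a ha using hfun
  have hmap : H = Multiset.map L.get Finset.univ.val := by
    rw [Fin.univ_val_map, List.ofFn_get]
    exact hLH.symm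
  have hcount : ∀ x : Fin n → F2,
      covCount n H x = (Finset.univ.filter (fun i : Fin L.length => a i x = 1)).card := by
    intro x
    rw [covCount, hmap, Multiset.countP_map]
    rw [Finset.card, Finset.filter_val]
    congr 1
    exact Multiset.filter_congr (fun i _ => ha i x)
  have hcov' : ∀ x : Fin n → F2, x ≠ 0 →
      k ≤ (Finset.univ.filter (fun i : Fin L.length => a i x = 1)).card :=
    fun x hx => (hcount x) ▸ hcov x hx
  have hmain := code_bound hk hn a hcov'
  rw [hmg] at hmain
  exact hmain
end
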